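/- If tier structure t is a refinement of tier structure t′ (meaning t′_a > t′_b implies t_a > t_b for all schools a, b), then every Nash equilibrium outcome of the tiered deferred acceptance mechanism under t is also a Nash equilibrium outcome of the tiered deferred acceptance mechanism under t′. -/

import Mathlib

set_option linter.unusedSectionVars false

namespace SchoolChoice

/-- A strict preference over `S ∪ {self}`, encoded by an injective ranking function on
`Option S`; `none` denotes being unmatched (the student himself), and a smaller rank
means more preferred. Injective rankings on a finite set are exactly strict linear orders. -/
structure Pref (S : Type) where
  rank : Option S → ℕ
  inj : Function.Injective rank

/-- Quotas together with strict priorities of the schools: `prank s` ranks the students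
at school `s`, a smaller rank meaning higher priority. -/
structure Prio (I S : Type) where
  quota : S → ℕ
  prank : S → I → ℕ
  inj : ∀ s, Function.Injective (prank s)

variable {I S : Type} [Fintype I] [Fintype S] [DecidableEq I] [DecidableEq S]

/-- `i` has strictly higher priority than `j` at school `s`. -/
def Prio.higher (E : Prio I S) (s : S) (i j : I) : Prop :=
  E.prank s i < E.prank s j

/-- A matching assigns to each student a school or himself (`none`). -/
abbrev Matching (I S : Type) := I → Option S

/-- The set of students assigned to school `s`. -/
def assigned (μ : Matching I S) (s : S) : Finset I :=
  Finset.univ.filter (fun i => μ i = some s)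

/-- Quotas are respected. -/
def Feasible (E : Prio I S) (μ : Matching I S) : Prop :=
  ∀ s, (assigned μ s).card ≤ E.quota s

/-- `(i, s)` is a blocking pair of `μ` with respect to preferences `R`:
`i` strictly prefers `s` to his assignment, and either `s` has an empty seat
(wastefulness) or some student assigned to `s` has lower priority than `i`
(justified envy). -/
def Blocks (E : Prio I S) (R : I → Pref S) (μ : Matching I S) (i : I) (s : S) : Prop :=
  (R i).rank (some s) < (R i).rank (μ i) ∧
    ((assigned μ s).card < E.quota s ∨ ∃ j, μ j = some s ∧ E.higher s i j)

/-- Individual rationality: every student weakly prefers his assignment to being unmatched. -/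
def IndivRat (R : I → Pref S) (μ : Matching I S) : Prop :=
  ∀ i, (R i).rank (μ i) ≤ (R i).rank none

/-- Non-wastefulness: no student prefers a school with an empty seat to his assignment. -/
def NonWasteful (E : Prio I S) (R : I → Pref S) (μ : Matching I S) : Prop :=
  ∀ i s, (R i).rank (some s) < (R i).rank (μ i) → E.quota s ≤ (assigned μ s).card

/-- Stability: feasible, individually rational, and no blocking pair
(no justified envy and non-wasteful). -/
def Stable (E : Prio I S) (R : I → Pref S) (μ : Matching I S) : Prop :=
  Feasible E μ ∧ IndivRat R μ ∧ ∀ i s, ¬ Blocks E R μ i s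

/-- The student-optimal stable matching for the (reported) preferences. -/
def StudentOptimal (E : Prio I S) (R : I → Pref S) (μ : Matching I S) : Prop :=
  Stable E R μ ∧ ∀ ν, Stable E R ν → ∀ i, (R i).rank (μ i) ≤ (R i).rank (ν i)

open Classical in
/-- The student-proposing deferred acceptance mechanism: by the Gale–Shapley theorem its
outcome is the (unique) student-optimal stable matching of the reported preferences. -/
noncomputable def DA (E : Prio I S) (R : I → Pref S) : Matching I S :=
  if h : ∃ μ, StudentOptimal E R μ then h.choose else fun _ => none

/-- A strict upper bound for the values of a ranking. -/
noncomputable def bnd (p : Pref S) : ℕ := (Finset.univ.sup p.rank) + 1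

lemma rank_lt_bnd (p : Pref S) (x : Option S) : p.rank x < bnd p :=
  Nat.lt_succ_of_le (Finset.le_sup (Finset.mem_univ x))

private lemma mul_add_lt {a K B r : ℕ} (ha : a ≤ K) (hr : r < B) :
    a * B + r < (K + 1) * B := by
  calc a * B + r < a * B + B := by omega
    _ = (a + 1) * B := by ring
    _ ≤ (K + 1) * B := Nat.mul_le_mul (by omega) le_rfl

/-- Is an alternative "inside the market" `A`?  `none` always is. -/
def goodB (A : S → Prop) [DecidablePred A] : Option S → Bool
  | none => true
  | some s => decide (A s)

/-- The preference truncated to the set of schools `A`: schools in `A` (and the outside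
option `none`) keep their relative order, while all schools outside `A` are pushed below
`none` (become unacceptable), keeping their relative order among themselves. -/
noncomputable def trunc (A : S → Prop) [DecidablePred A] (p : Pref S) : Pref S where
  rank x := (if goodB A x then 0 else bnd p) + p.rank x
  inj := by
    intro x y h
    by_cases hx : goodB A x <;> by_cases hy : goodB A y <;>
      simp only [hx, hy, if_true, if_false, Bool.false_eq_true, zero_add] at h
    · exact p.inj h
    · have := rank_lt_bnd p x; omega
    · have := rank_lt_bnd p y; omega
    · exact p.inj (by omega)

/-- The reshuffled preference with respect to a tier structure `t`: acceptable schools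
are grouped by tier in increasing tier order (keeping the original relative order within
each tier) above `none`, and all unacceptable schools are placed below `none`. -/
noncomputable def reshuffle (t : S → ℕ) (p : Pref S) : Pref S where
  rank x :=
    Option.elim x ((Finset.univ.sup t + 1) * bnd p)
      (fun s =>
        if p.rank (some s) < p.rank none then t s * bnd p + p.rank (some s)
        else (Finset.univ.sup t + 1) * bnd p + 1 + p.rank (some s))
  inj := by
    have hB : ∀ x, p.rank x < bnd p := rank_lt_bnd p
    have hK : ∀ s : S, t s ≤ Finset.univ.sup t := fun s => Finset.le_sup (Finset.mem_univ s)
    intro x y h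
    rcases x with _ | s <;> rcases y with _ | s' <;>
      simp only [Option.elim_none, Option.elim_some] at h
    · rfl
    · by_cases hy : p.rank (some s') < p.rank none <;> simp only [hy, if_true, if_false] at h
      · have := mul_add_lt (hK s') (hB (some s')); omega
      · omega
    · by_cases hx : p.rank (some s) < p.rank none <;> simp only [hx, if_true, if_false] at h
      · have := mul_add_lt (hK s) (hB (some s)); omega
      · omega
    · by_cases hx : p.rank (some s) < p.rank none <;>
        by_cases hy : p.rank (some s') < p.rank none <;>
        simp only [hx, hy, if_true, if_false] at h
      · have hts : t s = t s' := by
          rcases Nat.lt_trichotomy (t s) (t s') with h1 | h1 | h1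
          · have h2 : t s * bnd p + p.rank (some s) < t s' * bnd p + p.rank (some s') := by
              have h3 := mul_add_lt (a := t s) (K := t s' - 1) (B := bnd p) (by omega) (hB (some s))
              have h4 : (t s' - 1 + 1) * bnd p = t s' * bnd p := by congr 1; omega
              omega
            omega
          · exact h1
          · have h2 : t s' * bnd p + p.rank (some s') < t s * bnd p + p.rank (some s) := by
              have h3 := mul_add_lt (a := t s') (K := t s - 1) (B := bnd p) (by omega) (hB (some s'))
              have h4 : (t s - 1 + 1) * bnd p = t s * bnd p := by congr 1; omega
              omega
            omega
        rw [hts] at h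
        exact p.inj (by omega)
      · have := mul_add_lt (hK s) (hB (some s)); omega
      · have := mul_add_lt (hK s') (hB (some s')); omega
      · exact p.inj (by omega)

/-- A tier structure assigning each school a tier in `{1, …, T}`, each tier nonempty. -/
def IsTierStructure (t : S → ℕ) (T : ℕ) : Prop :=
  (∀ s, 1 ≤ t s ∧ t s ≤ T) ∧ ∀ k, 1 ≤ k → k ≤ T → ∃ s, t s = k

/-- Rounds `1, …, k` of the tiered deferred acceptance mechanism: in round `k` the
students left unmatched so far participate in the DA mechanism with their preferences
truncated to the tier-`k` schools (already matched students participate with nothing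
acceptable); students matched in earlier rounds keep their assignments. -/
noncomputable def TDAaux (E : Prio I S) (t : S → ℕ) (Q : I → Pref S) : ℕ → Matching I S
  | 0 => fun _ => none
  | k + 1 => fun i =>
      match TDAaux E t Q k i with
      | some s => some s
      | none =>
          DA E (fun j =>
            if TDAaux E t Q k j = none then trunc (fun s => t s = k + 1) (Q j)
            else trunc (fun _ => False) (Q j)) i

/-- The tiered deferred acceptance mechanism under tier structure `t`. -/
noncomputable def TDA (E : Prio I S) (t : S → ℕ) (Q : I → Pref S) : Matching I S :=
  TDAaux E t Q (Finset.univ.sup t)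

/-- `Q` is a (pure) Nash equilibrium of the preference revelation game induced by the
mechanism `f` when the true preferences are `R`: no student can obtain a school he truly
strictly prefers by unilaterally changing his report. -/
def NashEq (R : I → Pref S) (f : (I → Pref S) → Matching I S) (Q : I → Pref S) : Prop :=
  ∀ (i : I) (Qi' : Pref S),
    (R i).rank (f Q i) ≤ (R i).rank (f (Function.update Q i Qi') i)

/-- `μ` is a Nash equilibrium outcome of the revelation game induced by `f` at true
preferences `R`. -/
def NashOutcome (R : I → Pref S) (f : (I → Pref S) → Matching I S) (μ : Matching I S) : Prop :=
  ∃ Q, NashEq R f Q ∧ f Q = μ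

/-- The preference `p` is aligned with the tier structure `t`: a (weakly) more preferred
school always lies in a weakly earlier tier. -/
def AlignedPref (t : S → ℕ) (p : Pref S) : Prop :=
  ∀ s s' : S, p.rank (some s) ≤ p.rank (some s') → t s ≤ t s'

/-- `p` lists exactly the school in `o` (if any) as acceptable. -/
def OnlyAcceptable (p : Pref S) (o : Option S) : Prop :=
  ∀ s : S, (p.rank (some s) < p.rank none ↔ o = some s)

/-- An Ergin cycle of the priority structure among the schools in `A`. -/
def Cycle (E : Prio I S) (A : S → Prop) : Prop :=
  ∃ a b : S, A a ∧ A b ∧ a ≠ b ∧ ∃ i j k : I,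
    E.higher a i j ∧ E.higher a j k ∧ E.higher b k i ∧
    ∃ Ia Ib : Finset I, Disjoint Ia Ib ∧
      (∀ l ∈ Ia, l ≠ i ∧ l ≠ j ∧ l ≠ k ∧ E.higher a l j) ∧
      (∀ l ∈ Ib, l ≠ i ∧ l ≠ j ∧ l ≠ k ∧ E.higher b l i) ∧
      Ia.card = E.quota a - 1 ∧ Ib.card = E.quota b - 1

/-- Within-tier acyclicity of a generalized priority structure: no Ergin cycle among the
schools of any single tier. -/
def WithinTierAcyclic (E : Prio I S) (t : S → ℕ) : Prop :=
  ∀ k : ℕ, ¬ Cycle E (fun s => t s = k)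

/-- The (strict) preference `pr` of school `s` over sets of students is a responsive
extension of its priorities. -/
def Responsive (E : Prio I S) (s : S) (pr : Finset I → Finset I → Prop) : Prop :=
  ∀ (J : Finset I) (i j : I), i ∉ J → j ∉ J → E.higher s i j →
    pr (insert i J) (insert j J)

/-- `t` is a refinement of `t'`: `t'` ranks `a` in a strictly later tier than `b` only
if `t` does. -/
def Refines (t t' : S → ℕ) : Prop :=
  ∀ a b : S, t' b < t' a → t b < t a


/-! ### Part 1: an abstract rejection algorithm proving existence, uniqueness and
optimality of the student-optimal stable matching. -/

open Finset

/-- `s` is acceptable under `p`. -/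
def acc (p : Pref S) (s : S) : Prop := p.rank (some s) < p.rank none

/-- `x` is `none` or an acceptable school. -/
def okc (p : Pref S) : Option S → Prop
  | none => True
  | some s => acc p s

lemma rank_lt_none_of_le {p : Pref S} {s : S} (h : p.rank (some s) ≤ p.rank none) :
    acc p s := by
  rcases lt_or_eq_of_le h with h | h
  · exact h
  · exact absurd (p.inj h) (by simp)

lemma okc_of_IR {R : I → Pref S} {μ : Matching I S} (hIR : IndivRat R μ) (i : I) :
    okc (R i) (μ i) := by
  cases hμ : μ i with
  | none => trivial
  | some s =>
    have := hIR i; rw [hμ] at this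
    exact rank_lt_none_of_le this

section Algo

variable (E : Prio I S) (Q : I → Pref S)

/-- Non-struck acceptable schools of `i` at state `θ`. -/
noncomputable def cands (θ : I → ℕ) (i : I) : Finset S :=
  Finset.univ.filter (fun s => θ i ≤ (Q i).rank (some s) ∧ (Q i).rank (some s) < (Q i).rank none)

/-- Current demand of student `i` at state `θ`. -/
noncomputable def dem (θ : I → ℕ) (i : I) : Option S :=
  if h : (cands Q θ i).Nonempty then
    some (Classical.choose (Finset.exists_min_image (cands Q θ i)
      (fun s => (Q i).rank (some s)) h))
  else none

lemma dem_mem {θ : I → ℕ} {i : I} {s : S} (h : dem Q θ i = some s) :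
    s ∈ cands Q θ i ∧ ∀ s' ∈ cands Q θ i, (Q i).rank (some s) ≤ (Q i).rank (some s') := by
  unfold dem at h
  split at h
  · rename_i hne
    obtain ⟨hmem, hmin⟩ := Classical.choose_spec (Finset.exists_min_image (cands Q θ i)
      (fun s => (Q i).rank (some s)) hne)
    cases h; exact ⟨hmem, hmin⟩
  · cases h

lemma dem_none {θ : I → ℕ} {i : I} (h : dem Q θ i = none) : cands Q θ i = ∅ := by
  unfold dem at h
  split at h
  · cases h
  · rename_i hne; exact Finset.not_nonempty_iff_eq_empty.1 hne

lemma dem_acc {θ : I → ℕ} {i : I} {s : S} (h : dem Q θ i = some s) :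
    θ i ≤ (Q i).rank (some s) ∧ acc (Q i) s := by
  have := (dem_mem Q h).1
  simp only [cands, Finset.mem_filter] at this
  exact ⟨this.2.1, this.2.2⟩

/-- Minimality of the demand among non-struck `okc` options. -/
lemma dem_le {θ : I → ℕ} {i : I} {x : Option S} (hx : okc (Q i) x)
    (hθ : ∀ s, x = some s → θ i ≤ (Q i).rank (some s)) :
    (Q i).rank (dem Q θ i) ≤ (Q i).rank x := by
  cases x with
  | none =>
    cases hd : dem Q θ i with
    | none => exact le_rfl
    | some s => exact le_of_lt (dem_acc Q hd).2
  | some s =>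
    have hs : s ∈ cands Q θ i := by
      simp only [cands, Finset.mem_filter]
      exact ⟨Finset.mem_univ _, hθ s rfl, hx⟩
    have hne : (cands Q θ i).Nonempty := ⟨s, hs⟩
    cases hd : dem Q θ i with
    | none => exact absurd (dem_none Q hd ▸ hs) (by simp)
    | some s' => exact (dem_mem Q hd).2 s hs

/-- Applicants of school `s`. -/
noncomputable def apps (θ : I → ℕ) (s : S) : Finset I :=
  Finset.univ.filter (fun i => dem Q θ i = some s)

/-- Applicants of `s` with strictly higher priority than `i`. -/
noncomputable def beats (θ : I → ℕ) (s : S) (i : I) : Finset I :=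
  (apps Q θ s).filter (fun j => E.prank s j < E.prank s i)

/-- One rejection step. -/
def StepR (θ θ' : I → ℕ) : Prop :=
  ∃ i s, dem Q θ i = some s ∧ E.quota s ≤ (beats E Q θ s i).card ∧
    θ' = Function.update θ i ((Q i).rank (some s) + 1)

def Term (θ : I → ℕ) : Prop := ∀ i s, dem Q θ i = some s → (beats E Q θ s i).card < E.quota s

def Reach (θ : I → ℕ) : Prop := Relation.ReflTransGen (StepR E Q) (fun _ => 0) θ

noncomputable def outM (θ : I → ℕ) : Matching I S := fun i => dem Q θ i

def Inv1 (θ : I → ℕ) : Prop := ∀ ν, Stable E Q ν → ∀ i, θ i ≤ (Q i).rank (ν i)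

def Inv2 (θ : I → ℕ) : Prop := ∀ i s, acc (Q i) s → (Q i).rank (some s) < θ i →
  ∃ W : Finset I, W ⊆ apps Q θ s ∧ W.card = E.quota s ∧
    ∀ j ∈ W, E.prank s j < E.prank s i

def VB (θ : I → ℕ) : Prop := ∀ i, θ i ≤ bnd (Q i)

lemma dem_update_ne {θ : I → ℕ} {i : I} {v : ℕ} {j : I} (h : j ≠ i) :
    dem Q (Function.update θ i v) j = dem Q θ j := by
  have : cands Q (Function.update θ i v) j = cands Q θ j := by
    unfold cands; rw [Function.update_of_ne h]
  unfold dem; simp only [this]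

lemma stable_okc {ν : Matching I S} (hν : Stable E Q ν) (i : I) : okc (Q i) (ν i) :=
  okc_of_IR hν.2.1 i

lemma step_inv1 {θ θ' : I → ℕ} (hst : StepR E Q θ θ') (h1 : Inv1 E Q θ) : Inv1 E Q θ' := by
  obtain ⟨i, s, hdem, hcert, rfl⟩ := hst
  intro ν hν j
  rcases eq_or_ne j i with rfl | hji
  · rw [Function.update_self]
    have hok := stable_okc E Q hν j
    have hbase : θ j ≤ (Q j).rank (ν j) := h1 ν hν j
    have hle : (Q j).rank (some s) ≤ (Q j).rank (ν j) := by
      have := dem_le Q (θ := θ) (i := j) hok (fun s' hs' => by rw [hs'] at hbase; exact hbase)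
      rw [hdem] at this; exact this
    have hne : ν j ≠ some s := by
      intro hj
      -- every member of `beats` must also be matched to s, overflowing the quota
      have hall : ∀ k ∈ beats E Q θ s j, ν k = some s := by
        intro k hk
        simp only [beats, apps, Finset.mem_filter, Finset.mem_univ, true_and] at hk
        obtain ⟨hdk, hpk⟩ := hk
        by_contra hne
        have hok' := stable_okc E Q hν k
        have hb : θ k ≤ (Q k).rank (ν k) := h1 ν hν k
        have hle' : (Q k).rank (some s) ≤ (Q k).rank (ν k) := by
          have := dem_le Q (θ := θ) (i := k) hok' (fun s' hs' => by rw [hs'] at hb; exact hb)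
          rw [hdk] at this; exact this
        have hlt : (Q k).rank (some s) < (Q k).rank (ν k) :=
          lt_of_le_of_ne hle' (fun hh => hne ((Q k).inj hh).symm)
        exact hν.2.2 k s ⟨hlt, Or.inr ⟨j, hj, hpk⟩⟩
      have hsub : insert j (beats E Q θ s j) ⊆ assigned ν s := by
        intro k hk
        rcases Finset.mem_insert.1 hk with rfl | hk
        · simp only [assigned, Finset.mem_filter, Finset.mem_univ, true_and]; exact hj
        · simp only [assigned, Finset.mem_filter, Finset.mem_univ, true_and]; exact hall k hk
      have hnotin : j ∉ beats E Q θ s j := by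
        simp only [beats, Finset.mem_filter]; rintro ⟨-, h⟩; exact lt_irrefl _ h
      have := Finset.card_le_card hsub
      rw [Finset.card_insert_of_notMem hnotin] at this
      have := le_trans (Nat.add_le_add_right hcert 1) this
      have hfeas := hν.1 s
      omega
    have : (Q j).rank (some s) < (Q j).rank (ν j) :=
      lt_of_le_of_ne hle (fun hh => hne ((Q j).inj hh).symm)
    omega
  · rw [Function.update_of_ne hji]; exact h1 ν hν j

lemma step_inv2 {θ θ' : I → ℕ} (hst : StepR E Q θ θ') (h2 : Inv2 E Q θ) : Inv2 E Q θ' := by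
  obtain ⟨k, y, hdem, hcert, rfl⟩ := hst
  have happs : ∀ s (j : I), j ≠ k → (j ∈ apps Q θ s ↔ j ∈ apps Q (Function.update θ k ((Q k).rank (some y) + 1)) s) := by
    intro s j hj
    simp only [apps, Finset.mem_filter, Finset.mem_univ, true_and, dem_update_ne Q hj]
  -- helper: from the certificate, get a quota-sized subset of new applicants beating k
  have hwit : ∀ (i : I), E.prank y k ≤ E.prank y i →
      ∃ W : Finset I, W ⊆ apps Q (Function.update θ k ((Q k).rank (some y) + 1)) y ∧
        W.card = E.quota y ∧ ∀ j ∈ W, E.prank y j < E.prank y i := by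
    intro i hik
    obtain ⟨W, hWsub, hWcard⟩ := Finset.exists_subset_card_eq hcert
    refine ⟨W, ?_, hWcard, ?_⟩
    · intro j hj
      have hj' := hWsub hj
      simp only [beats, Finset.mem_filter] at hj'
      have hjk : j ≠ k := fun hh => by
        rw [hh] at hj'; exact lt_irrefl _ hj'.2
      exact (happs y j hjk).1 hj'.1
    · intro j hj
      have hj' := hWsub hj
      simp only [beats, Finset.mem_filter] at hj'
      exact lt_of_lt_of_le hj'.2 hik
  intro i s haccs hstruck
  rcases eq_or_ne i k with rfl | hik
  · -- i = k : either an old strike or the new strike at y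
    rw [Function.update_self] at hstruck
    rcases lt_or_ge ((Q i).rank (some s)) (θ i) with hold | hnew
    · obtain ⟨W, hW1, hW2, hW3⟩ := h2 i s haccs hold
      by_cases hkW : i ∈ W
      · exact absurd (hW3 i hkW) (lt_irrefl _)
      · refine ⟨W, ?_, hW2, hW3⟩
        intro j hj
        have hjk : j ≠ i := fun hh => hkW (hh ▸ hj)
        exact (happs s j hjk).1 (hW1 hj)
    · -- new strike: s = y
      have hsy : s = y := by
        have hle : (Q i).rank (some y) ≤ (Q i).rank (some s) := by
          have hs : s ∈ cands Q θ i := by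
            simp only [cands, Finset.mem_filter]; exact ⟨Finset.mem_univ _, hnew, haccs⟩
          exact (dem_mem Q hdem).2 s hs
        have : (Q i).rank (some s) ≤ (Q i).rank (some y) := by omega
        exact Option.some_injective _ ((Q i).inj (le_antisymm this hle))
      subst hsy
      exact hwit i le_rfl
  · rw [Function.update_of_ne hik] at hstruck
    obtain ⟨W, hW1, hW2, hW3⟩ := h2 i s haccs hstruck
    by_cases hkW : k ∈ W
    · have hys : y = s := by
        have := hW1 hkW
        simp only [apps, Finset.mem_filter] at this
        have := this.2; rw [hdem] at this; exact Option.some_injective _ this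
      subst hys
      exact hwit i (le_of_lt (hW3 k hkW))
    · refine ⟨W, ?_, hW2, hW3⟩
      intro j hj
      have hjk : j ≠ k := fun hh => hkW (hh ▸ hj)
      exact (happs s j hjk).1 (hW1 hj)

lemma step_vb {θ θ' : I → ℕ} (hst : StepR E Q θ θ') (h : VB Q θ) : VB Q θ' := by
  obtain ⟨i, s, hdem, hcert, rfl⟩ := hst
  intro j
  rcases eq_or_ne j i with rfl | hji
  · rw [Function.update_self]
    exact Nat.succ_le_of_lt (rank_lt_bnd (Q j) (some s))
  · rw [Function.update_of_ne hji]; exact h j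

lemma reach_invs {θ : I → ℕ} (h : Reach E Q θ) : Inv1 E Q θ ∧ Inv2 E Q θ ∧ VB Q θ := by
  induction h with
  | refl =>
    exact ⟨fun ν hν i => Nat.zero_le _, fun i s _ h => absurd h (Nat.not_lt_zero _),
      fun i => Nat.zero_le _⟩
  | tail hr hst ih =>
    exact ⟨step_inv1 E Q hst ih.1, step_inv2 E Q hst ih.2.1, step_vb E Q hst ih.2.2⟩

lemma term_stable {θ : I → ℕ} (h2 : Inv2 E Q θ) (hT : Term E Q θ) :
    Stable E Q (outM Q θ) := by
  have hassigned : ∀ s, assigned (outM Q θ) s = apps Q θ s := by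
    intro s; simp only [assigned, apps, outM]; congr
  have hfeas : ∀ s, (apps Q θ s).card ≤ E.quota s := by
    intro s
    by_contra hgt
    push_neg at hgt
    have hne : (apps Q θ s).Nonempty := by
      rw [← Finset.card_pos]; omega
    obtain ⟨i, hi, hmax⟩ := Finset.exists_max_image (apps Q θ s) (fun j => E.prank s j) hne
    have hdemi : dem Q θ i = some s := by
      simp only [apps, Finset.mem_filter] at hi; exact hi.2
    have hsub : (apps Q θ s).erase i ⊆ beats E Q θ s i := by
      intro j hj
      obtain ⟨hji, hj⟩ := Finset.mem_erase.1 hj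
      simp only [beats, Finset.mem_filter]
      refine ⟨hj, lt_of_le_of_ne (hmax j hj) ?_⟩
      intro hh; exact hji (E.inj s hh)
    have := Finset.card_le_card hsub
    rw [Finset.card_erase_of_mem hi] at this
    have := hT i s hdemi
    omega
  refine ⟨?_, ?_, ?_⟩
  · intro s; rw [hassigned]; exact hfeas s
  · intro i
    cases hd : dem Q θ i with
    | none => simp [outM, hd]
    | some s =>
      simp only [outM, hd]
      exact le_of_lt (dem_acc Q hd).2
  · rintro i s ⟨hpref, hcond⟩
    have hIR : (Q i).rank (outM Q θ i) ≤ (Q i).rank none := by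
      cases hd : dem Q θ i with
      | none => simp [outM, hd]
      | some s' => simp only [outM, hd]; exact le_of_lt (dem_acc Q hd).2
    have haccs : acc (Q i) s := lt_of_lt_of_le hpref hIR
    have hstruck : (Q i).rank (some s) < θ i := by
      by_contra hres
      push_neg at hres
      have : (Q i).rank (outM Q θ i) ≤ (Q i).rank (some s) := by
        unfold outM
        exact dem_le Q (x := some s) haccs (fun s' hs' => by cases hs'; exact hres)
      omega
    obtain ⟨W, hW1, hW2, hW3⟩ := h2 i s haccs hstruck
    have hWeq : W = apps Q θ s :=
      Finset.eq_of_subset_of_card_le hW1 (by rw [hW2]; exact hfeas s)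
    rcases hcond with hvac | ⟨j, hj, hhigher⟩
    · rw [hassigned] at hvac
      have := Finset.card_le_card hW1
      omega
    · have hjapps : j ∈ apps Q θ s := by
        simp only [apps, Finset.mem_filter, Finset.mem_univ, true_and]
        exact hj
      rw [← hWeq] at hjapps
      have := hW3 j hjapps
      unfold Prio.higher at hhigher
      omega

lemma term_opt {θ : I → ℕ} (h1 : Inv1 E Q θ) {ν : Matching I S} (hν : Stable E Q ν) (i : I) :
    (Q i).rank (outM Q θ i) ≤ (Q i).rank (ν i) := by
  unfold outM
  exact dem_le Q (stable_okc E Q hν i)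
    (fun s hs => by have := h1 ν hν i; rw [hs] at this; exact this)

lemma step_dec {θ θ' : I → ℕ} (hst : StepR E Q θ θ') (hvb : VB Q θ) :
    (∑ j, (bnd (Q j) - θ' j)) < ∑ j, (bnd (Q j) - θ j) := by
  obtain ⟨i, s, hdem, hcert, rfl⟩ := hst
  have hlow : θ i ≤ (Q i).rank (some s) := (dem_acc Q hdem).1
  have hup : (Q i).rank (some s) + 1 ≤ bnd (Q i) :=
    Nat.succ_le_of_lt (rank_lt_bnd (Q i) (some s))
  apply Finset.sum_lt_sum
  · intro j _
    rcases eq_or_ne j i with rfl | hji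
    · rw [Function.update_self]; omega
    · rw [Function.update_of_ne hji]
  · refine ⟨i, Finset.mem_univ i, ?_⟩
    rw [Function.update_self]; omega

lemma exists_term_from (n : ℕ) : ∀ (θ0 : I → ℕ), VB Q θ0 →
    (∑ j, (bnd (Q j) - θ0 j)) ≤ n →
    ∃ θ, Relation.ReflTransGen (StepR E Q) θ0 θ ∧ Term E Q θ := by
  induction n with
  | zero =>
    intro θ0 hvb hm
    by_cases hT : Term E Q θ0
    · exact ⟨θ0, Relation.ReflTransGen.refl, hT⟩
    · exfalso
      unfold Term at hT; push_neg at hT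
      obtain ⟨i, s, hdem, hcert⟩ := hT
      have hst : StepR E Q θ0 (Function.update θ0 i ((Q i).rank (some s) + 1)) :=
        ⟨i, s, hdem, hcert, rfl⟩
      have := step_dec E Q hst hvb
      omega
  | succ n ih =>
    intro θ0 hvb hm
    by_cases hT : Term E Q θ0
    · exact ⟨θ0, Relation.ReflTransGen.refl, hT⟩
    · unfold Term at hT; push_neg at hT
      obtain ⟨i, s, hdem, hcert⟩ := hT
      set θ1 := Function.update θ0 i ((Q i).rank (some s) + 1) with hθ1
      have hst : StepR E Q θ0 θ1 := ⟨i, s, hdem, hcert, rfl⟩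
      have hdec := step_dec E Q hst hvb
      obtain ⟨θ, hreach, hterm⟩ := ih θ1 (step_vb E Q hst hvb) (by omega)
      exact ⟨θ, Relation.ReflTransGen.head hst hreach, hterm⟩

/-- Existence of a student-optimal stable matching. -/
theorem exists_SO : ∃ μ, StudentOptimal E Q μ := by
  obtain ⟨θ, hreach, hterm⟩ :=
    exists_term_from E Q (∑ j, (bnd (Q j) - 0)) (fun _ => 0) (fun i => Nat.zero_le _) le_rfl
  have hR : Reach E Q θ := hreach
  obtain ⟨h1, h2, hvb⟩ := reach_invs E Q hR
  exact ⟨outM Q θ, term_stable E Q h2 hterm, fun ν hν i => term_opt E Q h1 hν i⟩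

/-- Uniqueness of the student-optimal stable matching. -/
theorem SO_unique {μ ν : Matching I S} (hμ : StudentOptimal E Q μ)
    (hν : StudentOptimal E Q ν) : μ = ν := by
  funext i
  exact (Q i).inj (le_antisymm (hμ.2 ν hν.1 i) (hν.2 μ hμ.1 i))

theorem DA_SO : StudentOptimal E Q (DA E Q) := by
  unfold DA
  rw [dif_pos (exists_SO E Q)]
  exact (exists_SO E Q).choose_spec

theorem DA_eq {ν : Matching I S} (hν : StudentOptimal E Q ν) : DA E Q = ν :=
  SO_unique E Q (DA_SO E Q) hν

theorem DA_stable : Stable E Q (DA E Q) := (DA_SO E Q).1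

theorem DA_opt {ν : Matching I S} (hν : Stable E Q ν) (i : I) :
    (Q i).rank (DA E Q i) ≤ (Q i).rank (ν i) := (DA_SO E Q).2 ν hν i

end Algo
/-! ### Part 2: comparative statics (silencing monotonicity) and order equivalence -/

section Mono

variable (E : Prio I S)

def Silent (p : Pref S) : Prop := ∀ s : S, ¬ acc p s

lemma silent_dem {Q : I → Pref S} {i : I} (h : Silent (Q i)) (θ : I → ℕ) :
    dem Q θ i = none := by
  unfold dem
  rw [dif_neg]
  rintro ⟨s, hs⟩
  simp only [cands, Finset.mem_filter] at hs
  exact h s hs.2.2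

lemma dem_congr {Q Q' : I → Pref S} {i : I} (h : Q i = Q' i) (θ : I → ℕ) :
    dem Q θ i = dem Q' θ i := by
  unfold dem cands; simp only [h]

lemma reach_silent_zero {Q : I → Pref S} {θ : I → ℕ} (hR : Reach E Q θ) {i : I}
    (h : Silent (Q i)) : θ i = 0 := by
  induction hR with
  | refl => rfl
  | tail hr hst ih =>
    obtain ⟨j, s, hdem, hcert, rfl⟩ := hst
    rcases eq_or_ne i j with rfl | hij
    · rw [silent_dem h] at hdem; cases hdem
    · rw [Function.update_of_ne hij]; exact ih

lemma step_mono {Q : I → Pref S} {θ θ' : I → ℕ} (hst : StepR E Q θ θ') (i : I) :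
    θ i ≤ θ' i := by
  obtain ⟨j, s, hdem, hcert, rfl⟩ := hst
  rcases eq_or_ne i j with rfl | hij
  · rw [Function.update_self]
    have := (dem_acc Q hdem).1; omega
  · rw [Function.update_of_ne hij]

lemma rtg_mono {Q : I → Pref S} {θ θ' : I → ℕ}
    (h : Relation.ReflTransGen (StepR E Q) θ θ') (i : I) : θ i ≤ θ' i := by
  induction h with
  | refl => exact le_rfl
  | tail hr hst ih => exact le_trans ih (step_mono E hst _)

lemma step_transfer {P P' : I → Pref S} (hsil : ∀ j, P j = P' j ∨ Silent (P j))
    {θ θ' : I → ℕ} (hst : StepR E P θ θ') : StepR E P' θ θ' := by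
  obtain ⟨i, s, hdem, hcert, rfl⟩ := hst
  have hPi : P i = P' i := by
    rcases hsil i with h | h
    · exact h
    · rw [silent_dem h] at hdem; cases hdem
  have happs : ∀ y, apps P θ y ⊆ apps P' θ y := by
    intro y j hj
    simp only [apps, Finset.mem_filter, Finset.mem_univ, true_and] at hj ⊢
    have hPj : P j = P' j := by
      rcases hsil j with h | h
      · exact h
      · rw [silent_dem h] at hj; cases hj
    rw [← dem_congr hPj]; exact hj
  refine ⟨i, s, ?_, ?_, ?_⟩
  · rw [← dem_congr hPi]; exact hdem
  · refine le_trans hcert (Finset.card_le_card ?_)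
    intro j hj
    simp only [beats, Finset.mem_filter] at hj ⊢
    exact ⟨happs s hj.1, hj.2⟩
  · rw [hPi]

lemma reach_transfer {P P' : I → Pref S} (hsil : ∀ j, P j = P' j ∨ Silent (P j))
    {θ : I → ℕ} (h : Reach E P θ) : Reach E P' θ := by
  induction h with
  | refl => exact Relation.ReflTransGen.refl
  | tail hr hst ih => exact Relation.ReflTransGen.tail ih (step_transfer E hsil hst)

theorem reach_term_SO {Q : I → Pref S} {θ : I → ℕ} (hR : Reach E Q θ) (hT : Term E Q θ) :
    StudentOptimal E Q (outM Q θ) := by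
  obtain ⟨h1, h2, hvb⟩ := reach_invs E Q hR
  exact ⟨term_stable E Q h2 hT, fun ν hν i => term_opt E Q h1 hν i⟩

/-- Silencing some students makes everyone else weakly better off. -/
theorem mono_silencing {P P' : I → Pref S} (hsil : ∀ j, P j = P' j ∨ Silent (P j))
    {j : I} (hj : P j = P' j) :
    (P j).rank (DA E P j) ≤ (P j).rank (DA E P' j) := by
  obtain ⟨θs, hreachs, hterms⟩ :=
    exists_term_from E P (∑ k, (bnd (P k) - 0)) (fun _ => 0) (fun i => Nat.zero_le _) le_rfl
  have hRs : Reach E P θs := hreachs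
  have hDAP : DA E P = outM P θs := DA_eq E P (reach_term_SO E hRs hterms)
  have hRs' : Reach E P' θs := reach_transfer E hsil hRs
  have hvb' : VB P' θs := by
    intro k
    rcases hsil k with h | h
    · rw [← h]; exact (reach_invs E P hRs).2.2 k
    · rw [reach_silent_zero E hRs h]; exact Nat.zero_le _
  obtain ⟨θh, hext, htermh⟩ :=
    exists_term_from E P' (∑ k, (bnd (P' k) - θs k)) θs hvb' le_rfl
  have hRh : Reach E P' θh := Relation.ReflTransGen.trans hRs' hext
  have hDAP' : DA E P' = outM P' θh := DA_eq E P' (reach_term_SO E hRh htermh)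
  rw [hDAP, hDAP']
  have hθ : θs j ≤ θh j := rtg_mono E hext j
  unfold outM
  apply dem_le
  · cases hd : dem P' θh j with
    | none => trivial
    | some s =>
      have := (dem_acc P' hd).2
      show acc (P j) s
      rw [hj]; exact this
  · intro s hs
    have := (dem_acc P' (hs ▸ rfl : dem P' θh j = some s)).1
    rw [← hj] at this
    omega

lemma DA_silent {P : I → Pref S} {i : I} (h : Silent (P i)) : DA E P i = none := by
  have hIR := (DA_stable E P).2.1 i
  cases hd : DA E P i with
  | none => rfl
  | some s =>
    rw [hd] at hIR
    exact absurd (rank_lt_none_of_le hIR) (h s)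

end Mono

section WEq

variable (E : Prio I S)

def WEquiv (p p' : Pref S) : Prop :=
  (∀ s, acc p s ↔ acc p' s) ∧
  ∀ x y, okc p x → okc p y → (p.rank x ≤ p.rank y ↔ p'.rank x ≤ p'.rank y)

lemma WEquiv.refl (p : Pref S) : WEquiv p p := ⟨fun _ => Iff.rfl, fun _ _ _ _ => Iff.rfl⟩

lemma WEquiv.symm {p p' : Pref S} (h : WEquiv p p') : WEquiv p' p := by
  refine ⟨fun s => (h.1 s).symm, fun x y hx hy => ?_⟩
  have hx' : okc p x := by cases x with
    | none => trivial
    | some s => exact (h.1 s).2 hx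
  have hy' : okc p y := by cases y with
    | none => trivial
    | some s => exact (h.1 s).2 hy
  exact (h.2 x y hx' hy').symm

lemma WEquiv.okc_iff {p p' : Pref S} (h : WEquiv p p') (x : Option S) :
    okc p x ↔ okc p' x := by
  cases x with
  | none => exact Iff.rfl
  | some s => exact h.1 s

lemma WEquiv.lt_iff {p p' : Pref S} (h : WEquiv p p') {x y : Option S}
    (hx : okc p x) (hy : okc p y) : (p.rank x < p.rank y ↔ p'.rank x < p'.rank y) := by
  rw [lt_iff_not_ge, lt_iff_not_ge, h.2 y x hy hx]

lemma stable_congr {P P' : I → Pref S} (h : ∀ j, WEquiv (P j) (P' j))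
    {μ : Matching I S} (hμ : Stable E P μ) : Stable E P' μ := by
  obtain ⟨hfeas, hIR, hnb⟩ := hμ
  have hokc : ∀ i, okc (P i) (μ i) := fun i => okc_of_IR hIR i
  have hIR' : IndivRat P' μ := by
    intro i
    exact ((h i).2 (μ i) none (hokc i) trivial).1 (hIR i)
  refine ⟨hfeas, hIR', ?_⟩
  rintro i s ⟨hpref, hcond⟩
  have haccs' : acc (P' i) s := by
    have := hIR' i
    exact lt_of_lt_of_le hpref this
  have haccs : acc (P i) s := ((h i).1 s).2 haccs'
  have hpref' : (P i).rank (some s) < (P i).rank (μ i) :=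
    ((h i).lt_iff (show okc (P i) (some s) from haccs) (hokc i)).2 hpref
  exact hnb i s ⟨hpref', hcond⟩

lemma SO_congr {P P' : I → Pref S} (h : ∀ j, WEquiv (P j) (P' j))
    {μ : Matching I S} (hμ : StudentOptimal E P μ) : StudentOptimal E P' μ := by
  refine ⟨stable_congr E h hμ.1, ?_⟩
  intro ν hν i
  have hν' : Stable E P ν := stable_congr E (fun j => (h j).symm) hν
  have := hμ.2 ν hν' i
  exact ((h i).2 (μ i) (ν i) (okc_of_IR hμ.1.2.1 i) (okc_of_IR hν'.2.1 i)).1 this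

lemma DA_congr {P P' : I → Pref S} (h : ∀ j, WEquiv (P j) (P' j)) : DA E P = DA E P' :=
  DA_eq E P' (SO_congr E h (DA_SO E P)) ▸ rfl

end WEq
/-! ### Part 3: facts about `trunc`, `reshuffle`, and special preferences -/

section TruncFacts

variable {A B : S → Prop} [DecidablePred A] [DecidablePred B]

lemma goodB_some_iff {s : S} : goodB A (some s) = true ↔ A s := by
  simp [goodB]

lemma trunc_rank_good (p : Pref S) {x : Option S} (hx : goodB A x = true) :
    (trunc A p).rank x = p.rank x := by
  simp only [trunc, hx, if_true, zero_add]

lemma trunc_rank_bad (p : Pref S) {x : Option S} (hx : ¬ goodB A x = true) :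
    (trunc A p).rank x = bnd p + p.rank x := by
  simp only [trunc]
  rw [if_neg hx]

lemma acc_trunc {p : Pref S} {s : S} : acc (trunc A p) s ↔ A s ∧ acc p s := by
  unfold acc
  have hnone : (trunc A p).rank none = p.rank none := trunc_rank_good p rfl
  by_cases hA : A s
  · rw [trunc_rank_good p (goodB_some_iff.2 hA), hnone]
    exact ⟨fun h => ⟨hA, h⟩, fun h => h.2⟩
  · rw [trunc_rank_bad p (fun h => hA (goodB_some_iff.1 h)), hnone]
    have := rank_lt_bnd p none
    constructor
    · intro h; omega
    · rintro ⟨h, -⟩; exact absurd h hA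

lemma okc_trunc_good {p : Pref S} {x : Option S} (h : okc (trunc A p) x) :
    goodB A x = true := by
  cases x with
  | none => rfl
  | some s => exact goodB_some_iff.2 (acc_trunc.1 h).1

lemma okc_trunc {p : Pref S} {x : Option S} (h : okc (trunc A p) x) : okc p x := by
  cases x with
  | none => trivial
  | some s => exact (acc_trunc.1 h).2

lemma trunc_le_iff {p : Pref S} {x y : Option S} (hx : goodB A x = true)
    (hy : goodB A y = true) :
    ((trunc A p).rank x ≤ (trunc A p).rank y ↔ p.rank x ≤ p.rank y) := by
  rw [trunc_rank_good p hx, trunc_rank_good p hy]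

lemma silent_trunc_of {p : Pref S} (h : ∀ s, A s → ¬ acc p s) : Silent (trunc A p) := by
  intro s hs
  obtain ⟨hA, hacc⟩ := acc_trunc.1 hs
  exact h s hA hacc

lemma silent_trunc_false (p : Pref S) : Silent (trunc (fun _ => False) p) :=
  silent_trunc_of (fun s h => absurd h (fun h => h))

def AgreeOn (A : S → Prop) [DecidablePred A] (p p' : Pref S) : Prop :=
  ∀ x y, goodB A x = true → goodB A y = true →
    (p.rank x ≤ p.rank y ↔ p'.rank x ≤ p'.rank y)

lemma AgreeOn.refl (p : Pref S) : AgreeOn A p p := fun _ _ _ _ => Iff.rfl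

lemma AgreeOn.acc_iff {p p' : Pref S} (h : AgreeOn A p p') {s : S} (hs : A s) :
    acc p s ↔ acc p' s := by
  unfold acc
  rw [lt_iff_not_ge, lt_iff_not_ge,
    h none (some s) rfl (goodB_some_iff.2 hs)]

lemma agree_trunc_WEquiv {p p' : Pref S} (h : AgreeOn A p p') :
    WEquiv (trunc A p) (trunc A p') := by
  constructor
  · intro s
    rw [acc_trunc, acc_trunc]
    by_cases hA : A s
    · simp only [hA, true_and]; exact h.acc_iff hA
    · simp [hA]
  · intro x y hx hy
    have hgx := okc_trunc_good hx
    have hgy := okc_trunc_good hy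
    rw [trunc_rank_good p hgx, trunc_rank_good p hgy,
      trunc_rank_good p' hgx, trunc_rank_good p' hgy]
    exact h x y hgx hgy

lemma WEquiv_of_rank_eq {p p' : Pref S} (h : ∀ x, p.rank x = p'.rank x) : WEquiv p p' := by
  constructor
  · intro s; unfold acc; rw [h, h]
  · intro x y _ _; rw [h, h]

lemma trunc_pred_congr (hAB : ∀ s, A s ↔ B s) (p : Pref S) (x : Option S) :
    (trunc A p).rank x = (trunc B p).rank x := by
  have : goodB A x = goodB B x := by
    cases x with
    | none => rfl
    | some s => simp [goodB, hAB s]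
  simp only [trunc, this]

lemma silent_WEquiv {p p' : Pref S} (hp : Silent p) (hp' : Silent p') : WEquiv p p' := by
  constructor
  · intro s; exact ⟨fun h => absurd h (hp s), fun h => absurd h (hp' s)⟩
  · intro x y hx hy
    cases x with
    | some s => exact absurd hx (hp s)
    | none => cases y with
      | some s => exact absurd hy (hp s)
      | none => simp

end TruncFacts

section SpecialPrefs

noncomputable def embS : S → ℕ := fun s => ((Fintype.equivFin S) s : ℕ)

lemma embS_inj : Function.Injective (embS (S := S)) := by
  intro a b h
  exact (Fintype.equivFin S).injective (Fin.ext h)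

/-- The preference that finds only `s0` acceptable. -/
noncomputable def onlyPref (s0 : S) : Pref S where
  rank x := match x with
    | none => 1
    | some s => if s = s0 then 0 else 2 + embS s
  inj := by
    rintro (_ | s) (_ | s') h
    · rfl
    · simp only at h
      split at h
      · omega
      · omega
    · simp only at h
      split at h
      · omega
      · omega
    · simp only at h
      split at h <;> split at h
      · rename_i h1 h2; rw [h1, h2]
      · omega
      · omega
      · rename_i h1 h2; rw [embS_inj (by omega : embS s = embS s')]

lemma onlyPref_rank_self (s0 : S) : (onlyPref s0).rank (some s0) = 0 := by
  simp [onlyPref]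

lemma onlyPref_rank_none (s0 : S) : (onlyPref s0).rank none = 1 := rfl

lemma acc_onlyPref {s0 s : S} : acc (onlyPref s0) s ↔ s = s0 := by
  unfold acc
  rw [onlyPref_rank_none]
  constructor
  · intro h
    by_contra hne
    simp only [onlyPref, if_neg hne] at h
    omega
  · intro h; rw [h, onlyPref_rank_self]; omega

/-- The preference that finds nothing acceptable. -/
noncomputable def nonePref (S : Type) [Fintype S] [DecidableEq S] : Pref S where
  rank x := match x with
    | none => 0
    | some s => 1 + embS s
  inj := by
    rintro (_ | s) (_ | s') h
    · rfl
    · simp only at h; omega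
    · simp only at h; omega
    · simp only at h
      rw [embS_inj (by omega : embS s = embS s')]

lemma silent_nonePref : Silent (nonePref S) := by
  intro s h
  unfold acc nonePref at h
  simp only at h
  omega

end SpecialPrefs

section ReshuffleFacts

variable (t : S → ℕ) (p : Pref S)

lemma reshuffle_rank_none :
    (reshuffle t p).rank none = (Finset.univ.sup t + 1) * bnd p := rfl

lemma reshuffle_rank_acc {s : S} (h : acc p s) :
    (reshuffle t p).rank (some s) = t s * bnd p + p.rank (some s) := by
  simp only [reshuffle, Option.elim_some]
  rw [if_pos (show p.rank (some s) < p.rank none from h)]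

lemma reshuffle_rank_nacc {s : S} (h : ¬ acc p s) :
    (reshuffle t p).rank (some s) =
      (Finset.univ.sup t + 1) * bnd p + 1 + p.rank (some s) := by
  simp only [reshuffle, Option.elim_some]
  rw [if_neg (show ¬ p.rank (some s) < p.rank none from h)]

lemma reshuffle_acc_lt_none {s : S} (h : acc p s) :
    (reshuffle t p).rank (some s) < (reshuffle t p).rank none := by
  rw [reshuffle_rank_acc t p h, reshuffle_rank_none]
  exact mul_add_lt (Finset.le_sup (Finset.mem_univ s)) (rank_lt_bnd p (some s))

lemma acc_reshuffle {s : S} : acc (reshuffle t p) s ↔ acc p s := by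
  constructor
  · intro h
    by_contra hacc
    unfold acc at h
    rw [reshuffle_rank_nacc t p hacc, reshuffle_rank_none] at h
    omega
  · exact reshuffle_acc_lt_none t p

def AlignedAcc (t : S → ℕ) (p : Pref S) : Prop :=
  ∀ a b : S, acc p a → acc p b → p.rank (some a) ≤ p.rank (some b) → t a ≤ t b

lemma alignedAcc_lt {t : S → ℕ} {p : Pref S} (hal : AlignedAcc t p) {a b : S}
    (ha : acc p a) (hb : acc p b) (h : t a < t b) :
    p.rank (some a) < p.rank (some b) := by
  rcases lt_or_ge (p.rank (some a)) (p.rank (some b)) with hh | hh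
  · exact hh
  · exact absurd (hal b a hb ha hh) (by omega)

lemma reshuffle_alignedAcc : AlignedAcc t (reshuffle t p) := by
  intro a b ha hb hle
  have ha' := (acc_reshuffle t p).1 ha
  have hb' := (acc_reshuffle t p).1 hb
  rw [reshuffle_rank_acc t p ha', reshuffle_rank_acc t p hb'] at hle
  by_contra hlt
  push_neg at hlt
  have h1 : t b * bnd p + p.rank (some b) < (t b + 1) * bnd p :=
    mul_add_lt le_rfl (rank_lt_bnd p (some b))
  have h2 : (t b + 1) * bnd p ≤ t a * bnd p := Nat.mul_le_mul hlt le_rfl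
  omega

lemma onlyPref_alignedAcc (s0 : S) : AlignedAcc t (onlyPref s0) := by
  intro a b ha hb _
  rw [acc_onlyPref.1 ha, acc_onlyPref.1 hb]

lemma reshuffle_agree (m : ℕ) : AgreeOn (fun s => t s = m) (reshuffle t p) p := by
  have hB : ∀ x, p.rank x < bnd p := rank_lt_bnd p
  have hK : ∀ s : S, t s ≤ Finset.univ.sup t := fun s => Finset.le_sup (Finset.mem_univ s)
  rintro (_ | s) (_ | s') hx hy
  · exact iff_of_true le_rfl le_rfl
  · -- none vs some s'
    have hts' : t s' = m := by simpa [goodB] using hy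
    by_cases h : acc p s'
    · refine iff_of_false ?_ ?_
      · rw [reshuffle_rank_none, reshuffle_rank_acc t p h]
        have := mul_add_lt (hK s') (hB (some s'))
        omega
      · unfold acc at h; omega
    · refine iff_of_true ?_ ?_
      · rw [reshuffle_rank_none, reshuffle_rank_nacc t p h]
        omega
      · unfold acc at h; omega
  · -- some s vs none
    have hts : t s = m := by simpa [goodB] using hx
    by_cases h : acc p s
    · refine iff_of_true (le_of_lt (reshuffle_acc_lt_none t p h)) (le_of_lt h)
    · refine iff_of_false ?_ ?_
      · rw [reshuffle_rank_none, reshuffle_rank_nacc t p h]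
        omega
      · unfold acc at h
        push_neg at h
        intro hle
        have : p.rank (some s) = p.rank none := le_antisymm hle h
        exact absurd ((p.inj this)) (by simp)
  · -- some vs some, same tier m
    have hts : t s = m := by simpa [goodB] using hx
    have hts' : t s' = m := by simpa [goodB] using hy
    by_cases h1 : acc p s <;> by_cases h2 : acc p s'
    · rw [reshuffle_rank_acc t p h1, reshuffle_rank_acc t p h2, hts, hts']
      omega
    · refine iff_of_true ?_ ?_
      · rw [reshuffle_rank_acc t p h1, reshuffle_rank_nacc t p h2]
        have := mul_add_lt (hK s) (hB (some s))
        omega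
      · unfold acc at h1 h2; omega
    · refine iff_of_false ?_ ?_
      · rw [reshuffle_rank_nacc t p h1, reshuffle_rank_acc t p h2]
        have := mul_add_lt (hK s') (hB (some s'))
        omega
      · unfold acc at h1 h2; omega
    · rw [reshuffle_rank_nacc t p h1, reshuffle_rank_nacc t p h2]
      omega

end ReshuffleFacts
/-! ### Part 4: the split lemma: DA over an aligned two-block market decomposes -/

section Split

variable (E : Prio I S)

/-- Round profile: unmatched students report `trunc A` of their preference, matched
students report nothing acceptable. -/
noncomputable def roundProf (A : S → Prop) [DecidablePred A] (P : I → Pref S)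
    (μ : Matching I S) : I → Pref S :=
  fun j => if μ j = none then trunc A (P j) else trunc (fun _ => False) (P j)

noncomputable def glue (μ ν : Matching I S) : Matching I S :=
  fun i => match μ i with
    | some s => some s
    | none => ν i

lemma glue_some {μ ν : Matching I S} {i : I} {s : S} (h : μ i = some s) :
    glue μ ν i = some s := by simp [glue, h]

lemma glue_none {μ ν : Matching I S} {i : I} (h : μ i = none) :
    glue μ ν i = ν i := by simp [glue, h]

lemma glue_eq_none {μ ν : Matching I S} {i : I} :
    glue μ ν i = none ↔ μ i = none ∧ ν i = none := by
  cases h : μ i with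
  | none => rw [glue_none h]; simp [h]
  | some s => rw [glue_some h]; simp [h]

lemma roundProf_alive {A : S → Prop} [DecidablePred A] {P : I → Pref S}
    {μ : Matching I S} {j : I} (h : μ j = none) : roundProf A P μ j = trunc A (P j) :=
  if_pos h

lemma roundProf_dead {A : S → Prop} [DecidablePred A] {P : I → Pref S}
    {μ : Matching I S} {j : I} (h : ¬ μ j = none) :
    roundProf A P μ j = trunc (fun _ => False) (P j) := if_neg h

lemma roundProf_silent_dead {A : S → Prop} [DecidablePred A] {P : I → Pref S}
    {μ : Matching I S} {j : I} (h : ¬ μ j = none) : Silent (roundProf A P μ j) := by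
  rw [roundProf_dead h]; exact silent_trunc_false (P j)

lemma acc_roundProf {A : S → Prop} [DecidablePred A] {P : I → Pref S}
    {μ : Matching I S} {j : I} {s : S} (h : acc (roundProf A P μ j) s) :
    μ j = none ∧ A s ∧ acc (P j) s := by
  by_cases hj : μ j = none
  · rw [roundProf_alive hj] at h
    exact ⟨hj, acc_trunc.1 h⟩
  · exact absurd h (roundProf_silent_dead hj s)

lemma DA_roundProf_val {A : S → Prop} [DecidablePred A] {P : I → Pref S}
    {μ : Matching I S} {j : I} {s : S} (h : DA E (roundProf A P μ) j = some s) :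
    μ j = none ∧ A s ∧ acc (P j) s := by
  have := okc_of_IR (DA_stable E (roundProf A P μ)).2.1 j
  rw [h] at this
  exact acc_roundProf this

lemma trunc_lt_iff {A : S → Prop} [DecidablePred A] (p : Pref S) {x y : Option S}
    (hx : goodB A x = true) (hy : goodB A y = true) :
    ((trunc A p).rank x < (trunc A p).rank y ↔ p.rank x < p.rank y) := by
  rw [trunc_rank_good p hx, trunc_rank_good p hy]

lemma goodB_some_of {A : S → Prop} [DecidablePred A] {s : S} (h : A s) :
    goodB A (some s) = true := goodB_some_iff.2 h

theorem split (A B : S → Prop) [DecidablePred A] [DecidablePred B]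
    (hdisj : ∀ s, A s → B s → False)
    (P : I → Pref S) (μpre : Matching I S)
    (halign : ∀ (j : I) (a b : S), A a → B b → acc (P j) a → acc (P j) b →
      (P j).rank (some a) < (P j).rank (some b)) :
    DA E (roundProf (fun s => A s ∨ B s) P μpre) =
      glue (DA E (roundProf A P μpre))
        (DA E (roundProf B P (glue μpre (DA E (roundProf A P μpre))))) := by
  classical
  set WA := roundProf A P μpre with hWAdef
  set ν := DA E WA with hνdef
  set W := roundProf (fun s => A s ∨ B s) P μpre with hWdef
  set WB := roundProf B P (glue μpre ν) with hWBdef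
  set ν₂ := DA E WB with hν₂def
  set lam := glue ν ν₂ with hlamdef
  set mu := DA E W with hmudef
  show mu = lam
  have hstA : Stable E WA ν := DA_stable E WA
  have hstW : Stable E W mu := DA_stable E W
  have hstB : Stable E WB ν₂ := DA_stable E WB
  -- value facts
  have hνval : ∀ j s, ν j = some s → μpre j = none ∧ A s ∧ acc (P j) s :=
    fun j s h => DA_roundProf_val E h
  have hν₂val : ∀ j s, ν₂ j = some s →
      (μpre j = none ∧ ν j = none) ∧ B s ∧ acc (P j) s := by
    intro j s h
    have := DA_roundProf_val E (h : DA E (roundProf B P (glue μpre ν)) j = some s)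
    exact ⟨glue_eq_none.1 this.1, this.2.1, this.2.2⟩
  have hμval : ∀ j s, mu j = some s → μpre j = none ∧ (A s ∨ B s) ∧ acc (P j) s := by
    intro j s h
    have := DA_roundProf_val E (h : DA E (roundProf (fun s => A s ∨ B s) P μpre) j = some s)
    exact ⟨this.1, this.2.1, this.2.2⟩
  have hν_dead : ∀ j, ¬ μpre j = none → ν j = none := by
    intro j hj
    cases h : ν j with
    | none => rfl
    | some s => exact absurd (hνval j s h).1 hj
  have hν₂_dead : ∀ j, ¬ μpre j = none → ν₂ j = none := by
    intro j hj
    cases h : ν₂ j with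
    | none => rfl
    | some s => exact absurd (hν₂val j s h).1.1 hj
  have hlam_dead : ∀ j, ¬ μpre j = none → lam j = none := by
    intro j hj
    rw [hlamdef, glue_none (hν_dead j hj)]
    exact hν₂_dead j hj
  have hμ_dead : ∀ j, ¬ μpre j = none → mu j = none := by
    intro j hj
    cases h : mu j with
    | none => rfl
    | some s => exact absurd (hμval j s h).1 hj
  have hWalive : ∀ j, μpre j = none → W j = trunc (fun s => A s ∨ B s) (P j) :=
    fun j h => roundProf_alive h
  have hWAalive : ∀ j, μpre j = none → WA j = trunc A (P j) :=
    fun j h => roundProf_alive h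
  -- lam value facts
  have hlamA : ∀ j s, A s → (lam j = some s ↔ ν j = some s) := by
    intro j s hA
    constructor
    · intro h
      cases hn : ν j with
      | some x => rw [hlamdef, glue_some hn] at h; exact h
      | none =>
        rw [hlamdef, glue_none hn] at h
        exact absurd hA (fun hA => hdisj s hA (hν₂val j s h).2.1)
    · intro h; rw [hlamdef, glue_some h]
  have hlamB : ∀ j s, B s → (lam j = some s ↔ ν₂ j = some s) := by
    intro j s hB
    constructor
    · intro h
      cases hn : ν j with
      | some x =>
        rw [hlamdef, glue_some hn] at h
        rw [h] at hn
        exact absurd (hνval j s hn).2.1 (fun hA => hdisj s hA hB)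
      | none => rw [hlamdef, glue_none hn] at h; exact h
    · intro h
      have hn : ν j = none := (hν₂val j s h).1.2
      rw [hlamdef, glue_none hn]; exact h
  have hassA : ∀ s, A s → assigned lam s = assigned ν s := by
    intro s hA; ext j
    simp only [assigned, Finset.mem_filter, Finset.mem_univ, true_and]
    exact hlamA j s hA
  have hassB : ∀ s, B s → assigned lam s = assigned ν₂ s := by
    intro s hB; ext j
    simp only [assigned, Finset.mem_filter, Finset.mem_univ, true_and]
    exact hlamB j s hB
  have hlamval : ∀ j s, lam j = some s → μpre j = none ∧ (A s ∨ B s) ∧ acc (P j) s := by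
    intro j s h
    cases hn : ν j with
    | some x =>
      rw [hlamdef, glue_some hn] at h; rw [h] at hn
      have := hνval j s hn
      exact ⟨this.1, Or.inl this.2.1, this.2.2⟩
    | none =>
      rw [hlamdef, glue_none hn] at h
      have := hν₂val j s h
      exact ⟨this.1.1, Or.inr this.2.1, this.2.2⟩
  -- (α) lam is stable w.r.t. W
  have hlamIR : IndivRat W lam := by
    intro j
    cases h : lam j with
    | none => exact le_rfl
    | some s =>
      obtain ⟨hj, hAB, hacc⟩ := hlamval j s h
      rw [hWalive j hj]
      exact le_of_lt (acc_trunc.2 ⟨hAB, hacc⟩)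
  have hlam_stable : Stable E W lam := by
    refine ⟨?_, hlamIR, ?_⟩
    · intro s
      by_cases hA : A s
      · rw [hassA s hA]; exact hstA.1 s
      · by_cases hB : B s
        · rw [hassB s hB]; exact hstB.1 s
        · have : assigned lam s = ∅ := by
            ext j
            simp only [assigned, Finset.mem_filter, Finset.mem_univ, true_and,
              Finset.notMem_empty, iff_false]
            intro h
            rcases (hlamval j s h).2.1 with h' | h'
            · exact hA h'
            · exact hB h'
          rw [this]; simp
    · rintro i s ⟨hpref, hcond⟩
      have haccWi : acc (W i) s :=
        lt_of_lt_of_le hpref (hlamIR i)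
      obtain ⟨hi, hABs, haccPs⟩ := acc_roundProf (A := fun s => A s ∨ B s) haccWi
      have hWi : W i = trunc (fun s => A s ∨ B s) (P i) := hWalive i hi
      rcases hABs with hA | hB
      · -- blocking pair transfers to the A-round
        refine hstA.2.2 i s ⟨?_, ?_⟩
        · rw [hWAalive i hi]
          cases hn : ν i with
          | none => exact acc_trunc.2 ⟨hA, haccPs⟩
          | some a =>
            obtain ⟨-, hAa, haccPa⟩ := hνval i a hn
            have hlami : lam i = some a := by rw [hlamdef, glue_some hn]
            rw [hlami, hWi] at hpref
            have hPlt : (P i).rank (some s) < (P i).rank (some a) :=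
              (trunc_lt_iff (P i) (goodB_some_of (Or.inl hA))
                (goodB_some_of (Or.inl hAa))).1 hpref
            exact (trunc_lt_iff (P i) (goodB_some_of hA) (goodB_some_of hAa)).2 hPlt
        · rcases hcond with hvac | ⟨j, hj, hhigh⟩
          · rw [hassA s hA] at hvac; exact Or.inl hvac
          · exact Or.inr ⟨j, (hlamA j s hA).1 hj, hhigh⟩
      · -- blocking pair transfers to the B-round
        have hνi : ν i = none := by
          cases hn : ν i with
          | none => rfl
          | some a =>
            obtain ⟨-, hAa, haccPa⟩ := hνval i a hn
            have hlami : lam i = some a := by rw [hlamdef, glue_some hn]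
            rw [hlami, hWi] at hpref
            have hPlt : (P i).rank (some s) < (P i).rank (some a) :=
              (trunc_lt_iff (P i) (goodB_some_of (Or.inr hB))
                (goodB_some_of (Or.inl hAa))).1 hpref
            exact absurd (halign i a s hAa hB haccPa haccPs) (by omega)
        have halive2 : glue μpre ν i = none := glue_eq_none.2 ⟨hi, hνi⟩
        have hWBi : WB i = trunc B (P i) := roundProf_alive halive2
        have hlami : lam i = ν₂ i := by rw [hlamdef, glue_none hνi]
        refine hstB.2.2 i s ⟨?_, ?_⟩
        · rw [hWBi]
          cases hn : ν₂ i with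
          | none => exact acc_trunc.2 ⟨hB, haccPs⟩
          | some b =>
            obtain ⟨-, hBb, haccPb⟩ := hν₂val i b hn
            rw [hlami, hn, hWi] at hpref
            have hPlt : (P i).rank (some s) < (P i).rank (some b) :=
              (trunc_lt_iff (P i) (goodB_some_of (Or.inr hB))
                (goodB_some_of (Or.inr hBb))).1 hpref
            exact (trunc_lt_iff (P i) (goodB_some_of hB) (goodB_some_of hBb)).2 hPlt
        · rcases hcond with hvac | ⟨j, hj, hhigh⟩
          · rw [hassB s hB] at hvac; exact Or.inl hvac
          · exact Or.inr ⟨j, (hlamB j s hB).1 hj, hhigh⟩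
  -- the A-part of mu
  set muA : Matching I S := fun j =>
    match mu j with
    | none => none
    | some s => if A s then some s else none
    with hmuAdef
  have hmuA_some : ∀ j s, muA j = some s ↔ (mu j = some s ∧ A s) := by
    intro j s
    rw [hmuAdef]
    cases h : mu j with
    | none => simp [h]
    | some x =>
      simp only [h]
      by_cases hA : A x
      · rw [if_pos hA]
        constructor
        · rintro h'; cases h'; exact ⟨rfl, hA⟩
        · rintro ⟨h', -⟩; cases h'; rfl
      · rw [if_neg hA]
        constructor
        · rintro ⟨⟩
        · rintro ⟨h', hAs⟩; cases h'; exact absurd hAs hA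
  have hass_muA : ∀ s, A s → assigned muA s = assigned mu s := by
    intro s hA; ext j
    simp only [assigned, Finset.mem_filter, Finset.mem_univ, true_and]
    rw [hmuA_some]
    exact ⟨fun h => h.1, fun h => ⟨h, hA⟩⟩
  have hmuA_stable : Stable E WA muA := by
    refine ⟨?_, ?_, ?_⟩
    · intro s
      by_cases hA : A s
      · rw [hass_muA s hA]; exact hstW.1 s
      · have : assigned muA s = ∅ := by
          ext j
          simp only [assigned, Finset.mem_filter, Finset.mem_univ, true_and,
            Finset.notMem_empty, iff_false]
          intro h
          exact hA ((hmuA_some j s).1 h).2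
        rw [this]; simp
    · intro j
      cases h : muA j with
      | none => exact le_rfl
      | some s =>
        obtain ⟨hmu, hA⟩ := (hmuA_some j s).1 h
        obtain ⟨hj, -, hacc⟩ := hμval j s hmu
        rw [hWAalive j hj]
        exact le_of_lt (acc_trunc.2 ⟨hA, hacc⟩)
    · rintro j a ⟨hpref, hcond⟩
      have hIRmuA : (WA j).rank (muA j) ≤ (WA j).rank none := by
        cases h : muA j with
        | none => exact le_rfl
        | some s =>
          obtain ⟨hmu, hA⟩ := (hmuA_some j s).1 h
          obtain ⟨hj, -, hacc⟩ := hμval j s hmu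
          rw [hWAalive j hj]
          exact le_of_lt (acc_trunc.2 ⟨hA, hacc⟩)
      have haccWA : acc (WA j) a := lt_of_lt_of_le hpref hIRmuA
      obtain ⟨hj, hAa, haccPa⟩ := acc_roundProf haccWA
      have hWAj : WA j = trunc A (P j) := hWAalive j hj
      have hWj : W j = trunc (fun s => A s ∨ B s) (P j) := hWalive j hj
      refine hstW.2.2 j a ⟨?_, ?_⟩
      · rw [hWj]
        cases hmj : mu j with
        | none =>
          exact acc_trunc.2 ⟨Or.inl hAa, haccPa⟩
        | some x =>
          obtain ⟨-, hABx, haccPx⟩ := hμval j x hmj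
          rcases hABx with hAx | hBx
          · have hmuAj : muA j = some x := (hmuA_some j x).2 ⟨hmj, hAx⟩
            rw [hmuAj, hWAj] at hpref
            have hPlt : (P j).rank (some a) < (P j).rank (some x) :=
              (trunc_lt_iff (P j) (goodB_some_of hAa) (goodB_some_of hAx)).1 hpref
            exact (trunc_lt_iff (P j) (goodB_some_of (Or.inl hAa))
              (goodB_some_of (Or.inl hAx))).2 hPlt
          · have hPlt := halign j a x hAa hBx haccPa haccPx
            exact (trunc_lt_iff (P j) (goodB_some_of (Or.inl hAa))
              (goodB_some_of (Or.inr hBx))).2 hPlt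
      · rcases hcond with hvac | ⟨l, hl, hhigh⟩
        · rw [hass_muA a hAa] at hvac; exact Or.inl hvac
        · exact Or.inr ⟨l, ((hmuA_some l a).1 hl).1, hhigh⟩
  have h3 : ∀ j, (WA j).rank (ν j) ≤ (WA j).rank (muA j) :=
    fun j => DA_opt E WA hmuA_stable j
  have h4 : ∀ j, (W j).rank (mu j) ≤ (W j).rank (lam j) :=
    fun j => DA_opt E W hlam_stable j
  have h5 : ∀ j, muA j = ν j := by
    intro j
    cases hn : ν j with
    | some a =>
      obtain ⟨hj, hAa, haccPa⟩ := hνval j a hn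
      have hWj : W j = trunc (fun s => A s ∨ B s) (P j) := hWalive j hj
      have hWAj : WA j = trunc A (P j) := hWAalive j hj
      have hlamj : lam j = some a := by rw [hlamdef, glue_some hn]
      have h4j := h4 j
      rw [hlamj] at h4j
      cases hmj : mu j with
      | none =>
        rw [hmj, hWj] at h4j
        have : (trunc (fun s => A s ∨ B s) (P j)).rank (some a) <
            (trunc (fun s => A s ∨ B s) (P j)).rank none :=
          acc_trunc.2 ⟨Or.inl hAa, haccPa⟩
        omega
      | some x =>
        obtain ⟨-, hABx, haccPx⟩ := hμval j x hmj
        rw [hmj, hWj] at h4j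
        have hPle : (P j).rank (some x) ≤ (P j).rank (some a) := by
          have := trunc_rank_good (A := fun s => A s ∨ B s) (P j)
            (goodB_some_of (show A x ∨ B x from hABx))
          have := trunc_rank_good (A := fun s => A s ∨ B s) (P j)
            (goodB_some_of (Or.inl hAa))
          rw [trunc_rank_good (P j) (goodB_some_of (show A x ∨ B x from hABx)),
            trunc_rank_good (P j) (goodB_some_of (Or.inl hAa))] at h4j
          exact h4j
        have hAx : A x := by
          rcases hABx with hAx | hBx
          · exact hAx
          · exact absurd (halign j a x hAa hBx haccPa haccPx) (by omega)
        have hmuAj : muA j = some x := (hmuA_some j x).2 ⟨hmj, hAx⟩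
        have h3j := h3 j
        rw [hn, hmuAj, hWAj, trunc_rank_good (P j) (goodB_some_of hAa),
          trunc_rank_good (P j) (goodB_some_of hAx)] at h3j
        have heq : (P j).rank (some a) = (P j).rank (some x) := le_antisymm h3j hPle
        rw [hmuAj]
        exact ((P j).inj heq).symm
    | none =>
      cases hm : muA j with
      | none => rfl
      | some x =>
        obtain ⟨hmu, hAx⟩ := (hmuA_some j x).1 hm
        obtain ⟨hj, -, haccPx⟩ := hμval j x hmu
        have h3j := h3 j
        have hWAj : WA j = trunc A (P j) := hWAalive j hj
        rw [hn, hm, hWAj] at h3j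
        have : (trunc A (P j)).rank (some x) < (trunc A (P j)).rank none :=
          acc_trunc.2 ⟨hAx, haccPx⟩
        omega
  -- the B-part of mu
  set muB : Matching I S := fun j => if ν j = none then mu j else none with hmuBdef
  have hmuB_val : ∀ j s, muB j = some s →
      ν j = none ∧ mu j = some s ∧ B s ∧ acc (P j) s ∧ μpre j = none := by
    intro j s h
    simp only [hmuBdef] at h
    by_cases hn : ν j = none
    · rw [if_pos hn] at h
      obtain ⟨hj, hABs, haccPs⟩ := hμval j s h
      have hBs : B s := by
        rcases hABs with hAs | hBs
        · have : muA j = some s := (hmuA_some j s).2 ⟨h, hAs⟩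
          rw [h5 j, hn] at this; cases this
        · exact hBs
      exact ⟨hn, h, hBs, haccPs, hj⟩
    · rw [if_neg hn] at h; cases h
  have hmuB_iff : ∀ l b, B b → (muB l = some b ↔ mu l = some b) := by
    intro l b hB
    constructor
    · intro h; exact (hmuB_val l b h).2.1
    · intro h
      have hn : ν l = none := by
        cases hnl : ν l with
        | none => rfl
        | some a =>
          have hmuAl : muA l = some a := by rw [h5 l, hnl]
          obtain ⟨hmu', hAa⟩ := (hmuA_some l a).1 hmuAl
          rw [h] at hmu'
          have hba : b = a := Option.some_injective _ hmu'
          exact ((hdisj a hAa (hba ▸ hB)).elim)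
      simp only [hmuBdef]
      rw [if_pos hn]; exact h
  have hass_muB : ∀ s, B s → assigned muB s = assigned mu s := by
    intro s hB; ext j
    simp only [assigned, Finset.mem_filter, Finset.mem_univ, true_and]
    exact hmuB_iff j s hB
  have hmuB_stable : Stable E WB muB := by
    refine ⟨?_, ?_, ?_⟩
    · intro s
      by_cases hB : B s
      · rw [hass_muB s hB]; exact hstW.1 s
      · have : assigned muB s = ∅ := by
          ext j
          simp only [assigned, Finset.mem_filter, Finset.mem_univ, true_and,
            Finset.notMem_empty, iff_false]
          intro h
          exact hB (hmuB_val j s h).2.2.1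
        rw [this]; simp
    · intro j
      cases h : muB j with
      | none => exact le_rfl
      | some s =>
        obtain ⟨hn, hmu, hB, hacc, hj⟩ := hmuB_val j s h
        have halive2 : glue μpre ν j = none := glue_eq_none.2 ⟨hj, hn⟩
        have hWBj : WB j = trunc B (P j) := roundProf_alive halive2
        rw [hWBj]
        exact le_of_lt (acc_trunc.2 ⟨hB, hacc⟩)
    · rintro j b ⟨hpref, hcond⟩
      have hIRmuB : (WB j).rank (muB j) ≤ (WB j).rank none := by
        cases h : muB j with
        | none => exact le_rfl
        | some s =>
          obtain ⟨hn, hmu, hB, hacc, hj⟩ := hmuB_val j s h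
          have halive2 : glue μpre ν j = none := glue_eq_none.2 ⟨hj, hn⟩
          have hWBj : WB j = trunc B (P j) := roundProf_alive halive2
          rw [hWBj]
          exact le_of_lt (acc_trunc.2 ⟨hB, hacc⟩)
      have haccWB : acc (WB j) b := lt_of_lt_of_le hpref hIRmuB
      obtain ⟨halive2, hBb, haccPb⟩ := acc_roundProf haccWB
      obtain ⟨hj, hνn⟩ := glue_eq_none.1 halive2
      have hWBj : WB j = trunc B (P j) := roundProf_alive halive2
      have hWj : W j = trunc (fun s => A s ∨ B s) (P j) := hWalive j hj
      have hmuBj : muB j = mu j := by simp only [hmuBdef]; rw [if_pos hνn]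
      refine hstW.2.2 j b ⟨?_, ?_⟩
      · rw [hWj]
        cases hmj : mu j with
        | none => exact acc_trunc.2 ⟨Or.inr hBb, haccPb⟩
        | some x =>
          obtain ⟨-, hABx, haccPx⟩ := hμval j x hmj
          have hBx : B x := by
            rcases hABx with hAx | hBx
            · have : muA j = some x := (hmuA_some j x).2 ⟨hmj, hAx⟩
              rw [h5 j, hνn] at this; cases this
            · exact hBx
          rw [hmuBj, hmj, hWBj] at hpref
          have hPlt : (P j).rank (some b) < (P j).rank (some x) :=
            (trunc_lt_iff (P j) (goodB_some_of hBb) (goodB_some_of hBx)).1 hpref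
          exact (trunc_lt_iff (P j) (goodB_some_of (Or.inr hBb))
            (goodB_some_of (Or.inr hBx))).2 hPlt
      · rcases hcond with hvac | ⟨l, hl, hhigh⟩
        · rw [hass_muB b hBb] at hvac; exact Or.inl hvac
        · exact Or.inr ⟨l, (hmuB_iff l b hBb).1 hl, hhigh⟩
  have h7 : ∀ j, (WB j).rank (ν₂ j) ≤ (WB j).rank (muB j) :=
    fun j => DA_opt E WB hmuB_stable j
  have h8 : ∀ j, (W j).rank (lam j) ≤ (W j).rank (mu j) := by
    intro j
    by_cases hj : μpre j = none
    · cases hn : ν j with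
      | some a =>
        have hlamj : lam j = some a := by rw [hlamdef, glue_some hn]
        have hmuAj : muA j = some a := by rw [h5 j, hn]
        have hmuj : mu j = some a := ((hmuA_some j a).1 hmuAj).1
        rw [hlamj, hmuj]
      | none =>
        have hlamj : lam j = ν₂ j := by rw [hlamdef, glue_none hn]
        have hmuBj : muB j = mu j := by simp only [hmuBdef]; rw [if_pos hn]
        have halive2 : glue μpre ν j = none := glue_eq_none.2 ⟨hj, hn⟩
        have hWBj : WB j = trunc B (P j) := roundProf_alive halive2
        have hWj : W j = trunc (fun s => A s ∨ B s) (P j) := hWalive j hj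
        have h7j := h7 j
        rw [hmuBj, hWBj] at h7j
        -- transfer from trunc B ranks to trunc (A∨B) ranks
        have hgood2 : goodB B (ν₂ j) = true := by
          cases h2 : ν₂ j with
          | none => rfl
          | some b => exact goodB_some_of (hν₂val j b h2).2.1
        have hgoodm : goodB B (mu j) = true := by
          cases hm : mu j with
          | none => rfl
          | some x =>
            have : muB j = some x := by rw [hmuBj, hm]
            exact goodB_some_of (hmuB_val j x this).2.2.1
        rw [trunc_rank_good (P j) hgood2, trunc_rank_good (P j) hgoodm] at h7j
        have hgood2' : goodB (fun s => A s ∨ B s) (ν₂ j) = true := by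
          cases h2 : ν₂ j with
          | none => rfl
          | some b => exact goodB_some_of (Or.inr (hν₂val j b h2).2.1)
        have hgoodm' : goodB (fun s => A s ∨ B s) (mu j) = true := by
          cases hm : mu j with
          | none => rfl
          | some x =>
            have : muB j = some x := by rw [hmuBj, hm]
            exact goodB_some_of (Or.inr (hmuB_val j x this).2.2.1)
        rw [hlamj, hWj, trunc_rank_good (P j) hgood2', trunc_rank_good (P j) hgoodm']
        exact h7j
    · rw [hlam_dead j hj, hμ_dead j hj]
  funext j
  exact (W j).inj (le_antisymm (h4 j) (h8 j))

end Split
/-! ### Part 5: TDA basic facts, congruence, and the decomposition theorem -/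

section TDAFacts

variable (E : Prio I S)

lemma tdaaux_succ (t : S → ℕ) (Q : I → Pref S) (k : ℕ) :
    TDAaux E t Q (k + 1) = glue (TDAaux E t Q k)
      (DA E (roundProf (fun s => t s = k + 1) Q (TDAaux E t Q k))) := by
  funext i
  show (match TDAaux E t Q k i with
    | some s => some s
    | none => DA E (fun j => if TDAaux E t Q k j = none
        then trunc (fun s => t s = k + 1) (Q j)
        else trunc (fun _ => False) (Q j)) i) = _
  cases h : TDAaux E t Q k i with
  | some s => rw [glue_some h]
  | none => rw [glue_none h]; rfl

lemma tdaaux_mono {t : S → ℕ} {Q : I → Pref S} {k l : ℕ} {i : I} {s : S}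
    (h : TDAaux E t Q k i = some s) (hkl : k ≤ l) : TDAaux E t Q l i = some s := by
  induction l with
  | zero => exact (Nat.le_zero.1 hkl) ▸ h
  | succ l ih =>
    rcases Nat.lt_or_ge k (l + 1) with hlt | hge
    · have := ih (by omega)
      rw [tdaaux_succ, glue_some this]
    · have : k = l + 1 := by omega
      exact this ▸ h

lemma tdaaux_none_mono {t : S → ℕ} {Q : I → Pref S} {k l : ℕ} {i : I}
    (h : TDAaux E t Q k i = none) (hkl : l ≤ k) : TDAaux E t Q l i = none := by
  cases hm : TDAaux E t Q l i with
  | none => rfl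
  | some s => rw [tdaaux_mono E hm hkl] at h; cases h

lemma tdaaux_val {t : S → ℕ} {Q : I → Pref S} : ∀ {k : ℕ} {i : I} {s : S},
    TDAaux E t Q k i = some s →
    acc (Q i) s ∧ t s ≤ k ∧ TDAaux E t Q (t s) i = some s ∧
      ∀ m, m < t s → TDAaux E t Q m i = none := by
  intro k
  induction k with
  | zero => intro i s h; cases h
  | succ k ih =>
    intro i s h
    rw [tdaaux_succ] at h
    cases hm : TDAaux E t Q k i with
    | some x =>
      rw [glue_some hm] at h
      cases h
      obtain ⟨h1, h2, h3, h4⟩ := ih hm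
      exact ⟨h1, by omega, h3, h4⟩
    | none =>
      rw [glue_none hm] at h
      obtain ⟨-, hts, hacc⟩ := DA_roundProf_val E h
      refine ⟨hacc, by omega, ?_, ?_⟩
      · rw [hts]
        rw [tdaaux_succ, glue_none hm]
        exact h
      · intro m hmlt
        rw [hts] at hmlt
        exact tdaaux_none_mono E hm (by omega)

lemma roundProf_pred_congr {A B : S → Prop} [DecidablePred A] [DecidablePred B]
    (hAB : ∀ s, A s ↔ B s) (P : I → Pref S) (μ : Matching I S) :
    DA E (roundProf A P μ) = DA E (roundProf B P μ) := by
  apply DA_congr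
  intro j
  by_cases hj : μ j = none
  · rw [roundProf_alive (A := A) hj, roundProf_alive (A := B) hj]
    exact WEquiv_of_rank_eq (trunc_pred_congr hAB (P j))
  · rw [roundProf_dead (A := A) hj, roundProf_dead (A := B) hj]
    exact WEquiv.refl _

lemma tdaaux_congr {t : S → ℕ} {P P' : I → Pref S}
    (h : ∀ j m, AgreeOn (fun s => t s = m) (P j) (P' j)) :
    ∀ k, TDAaux E t P k = TDAaux E t P' k := by
  intro k
  induction k with
  | zero => rfl
  | succ k ih =>
    rw [tdaaux_succ, tdaaux_succ, ih]
    have hda : DA E (roundProf (fun s => t s = k + 1) P (TDAaux E t P' k)) =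
        DA E (roundProf (fun s => t s = k + 1) P' (TDAaux E t P' k)) := by
      apply DA_congr
      intro j
      by_cases hj : TDAaux E t P' k j = none
      · rw [roundProf_alive hj, roundProf_alive hj]
        exact agree_trunc_WEquiv (h j (k + 1))
      · rw [roundProf_dead hj, roundProf_dead hj]
        exact silent_WEquiv (silent_trunc_false _) (silent_trunc_false _)
    rw [hda]

lemma glue_assoc (μ ν ρ : Matching I S) : glue μ (glue ν ρ) = glue (glue μ ν) ρ := by
  funext i
  cases h : μ i with
  | some s => rw [glue_some h, glue_some (glue_some h : glue μ ν i = some s)]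
  | none =>
    rw [glue_none h]
    have h2 : glue μ ν i = ν i := glue_none h
    cases hv : ν i with
    | some s => rw [glue_some hv, glue_some (h2.trans hv)]
    | none => rw [glue_none hv, glue_none (h2.trans hv)]

end TDAFacts

section Decomp

variable (E : Prio I S)

/-- Decomposition: on profiles aligned with the finer tier structure `t`, TDA under the
coarser structure `t'` coincides with TDA under `t`. -/
theorem tda_decomp (t t' : S → ℕ) (ht0 : ∀ s, 1 ≤ t s) (ht1 : ∀ s, 1 ≤ t' s)
    (href : Refines t t') (P : I → Pref S) (hal : ∀ j, AlignedAcc t (P j)) :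
    ∀ k', TDAaux E t' P k' =
      TDAaux E t P ((Finset.univ.filter (fun s => t' s ≤ k')).sup t) := by
  classical
  set ψ : ℕ → ℕ := fun k' => (Finset.univ.filter (fun s => t' s ≤ k')).sup t with hψ
  have hts_le_psi : ∀ {s k'}, t' s ≤ k' → t s ≤ ψ k' := by
    intro s k' h
    exact Finset.le_sup (by simp only [Finset.mem_filter, Finset.mem_univ, true_and]; exact h)
  have hpsi_zero : ψ 0 = 0 := by
    have h0 : (Finset.univ.filter (fun s => t' s ≤ 0)) = ∅ := by
      ext s
      simp only [Finset.mem_filter, Finset.mem_univ, true_and, Finset.notMem_empty, iff_false]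
      have := ht1 s; omega
    show (Finset.univ.filter (fun s => t' s ≤ 0)).sup t = 0
    rw [h0, Finset.sup_empty]
    rfl
  have hpsi_mono : ∀ {k l : ℕ}, k ≤ l → ψ k ≤ ψ l := by
    intro k l hkl
    apply Finset.sup_mono
    intro s hs
    simp only [Finset.mem_filter, Finset.mem_univ, true_and] at hs ⊢
    omega
  have hpsi_mem : ∀ {k'}, 0 < ψ k' → ∃ s, t' s ≤ k' ∧ t s = ψ k' := by
    intro k' hpos
    have hne : (Finset.univ.filter (fun s => t' s ≤ k')).Nonempty := by
      by_contra hend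
      rw [Finset.not_nonempty_iff_eq_empty] at hend
      rw [hψ] at hpos
      simp only [hend, Finset.sup_empty] at hpos
      exact absurd hpos (by simp [Nat.bot_eq_zero])
    obtain ⟨s, hs, hsup⟩ := Finset.exists_mem_eq_sup _ hne t
    simp only [Finset.mem_filter, Finset.mem_univ, true_and] at hs
    exact ⟨s, hs, hsup.symm⟩
  have block_low : ∀ {s k'}, t' s = k' + 1 → ψ k' < t s := by
    intro s k' hs
    by_contra hle
    push_neg at hle
    have hpos : 0 < ψ k' := by have := ht0 s; omega
    obtain ⟨s0, hs0, hts0⟩ := hpsi_mem hpos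
    have : t' s0 < t' s := by omega
    have := href s s0 this
    omega
  have tier_of_block : ∀ {s k'}, ψ k' < t s → t s ≤ ψ (k' + 1) → t' s = k' + 1 := by
    intro s k' hlow hhigh
    have h1 : k' < t' s := by
      by_contra hle
      push_neg at hle
      have := hts_le_psi hle
      omega
    have h2 : t' s ≤ k' + 1 := by
      have hpos : 0 < ψ (k' + 1) := by have := ht0 s; omega
      obtain ⟨s1, hs1, hts1⟩ := hpsi_mem hpos
      by_contra hgt
      push_neg at hgt
      have : t' s1 < t' s := by omega
      have := href s s1 this
      omega
    omega
  intro k'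
  induction k' with
  | zero =>
    show TDAaux E t' P 0 = TDAaux E t P (ψ 0)
    rw [hpsi_zero]
    rfl
  | succ k' ih =>
    show TDAaux E t' P (k' + 1) = TDAaux E t P (ψ (k' + 1))
    have ih' : TDAaux E t' P k' = TDAaux E t P (ψ k') := ih
    -- inner induction over the sub-rounds of the block
    have inner : ∀ d, ψ k' + d ≤ ψ (k' + 1) →
        TDAaux E t' P (k' + 1) =
          glue (TDAaux E t P (ψ k' + d))
            (DA E (roundProf (fun s => t' s = k' + 1 ∧ ψ k' + d < t s) P
              (TDAaux E t P (ψ k' + d)))) := by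
      intro d
      induction d with
      | zero =>
        intro _
        have hz : ψ k' + 0 = ψ k' := rfl
        rw [hz, tdaaux_succ, ih']
        exact congrArg _ (roundProf_pred_congr E
          (fun s => ⟨fun h => ⟨h, block_low h⟩, fun h => h.1⟩) P _)
      | succ d ihd =>
        intro hbound
        have hbound' : ψ k' + d ≤ ψ (k' + 1) := by omega
        rw [ihd hbound']
        set r := ψ k' + d with hr
        set M := TDAaux E t P r with hM
        -- split the head tier off the rest of the block
        have hsplit := split E (fun s => t' s = k' + 1 ∧ t s = r + 1)
          (fun s => t' s = k' + 1 ∧ r + 1 < t s)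
          (by rintro s ⟨-, h1⟩ ⟨-, h2⟩; omega) P M
          (by
            rintro j a b ⟨-, ha⟩ ⟨-, hb⟩ hacca haccb
            exact alignedAcc_lt (hal j) hacca haccb (by omega))
        have hpredAB : ∀ s, ((t' s = k' + 1 ∧ t s = r + 1) ∨ (t' s = k' + 1 ∧ r + 1 < t s))
            ↔ (t' s = k' + 1 ∧ r < t s) := by
          intro s
          constructor
          · rintro (⟨h1, h2⟩ | ⟨h1, h2⟩) <;> exact ⟨h1, by omega⟩
          · rintro ⟨h1, h2⟩
            rcases eq_or_lt_of_le (show r + 1 ≤ t s by omega) with h | h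
            · exact Or.inl ⟨h1, h.symm⟩
            · exact Or.inr ⟨h1, h⟩
        have hpredA : ∀ s, (t' s = k' + 1 ∧ t s = r + 1) ↔ t s = r + 1 := by
          intro s
          constructor
          · exact fun h => h.2
          · intro h
            refine ⟨?_, h⟩
            exact tier_of_block (by omega) (by omega)
        -- rewrite the big-round DA via the predicate equivalence, then split
        rw [roundProf_pred_congr E (fun s => (hpredAB s).symm) P M, hsplit,
          roundProf_pred_congr E hpredA P M]
        have hstep : glue M (DA E (roundProf (fun s => t s = r + 1) P M))
            = TDAaux E t P (r + 1) := by
          rw [hM, hr, ← tdaaux_succ]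
        rw [glue_assoc, hstep]
        have : ψ k' + (d + 1) = r + 1 := by omega
        rw [this]
    have hle : ψ k' ≤ ψ (k' + 1) := hpsi_mono (by omega)
    have := inner (ψ (k' + 1) - ψ k') (by omega)
    rw [show ψ k' + (ψ (k' + 1) - ψ k') = ψ (k' + 1) by omega] at this
    rw [this]
    -- the leftover predicate is empty, so the extra DA round matches nobody
    funext j
    cases hj : TDAaux E t P (ψ (k' + 1)) j with
    | some s => rw [glue_some hj]
    | none =>
      rw [glue_none hj]
      apply DA_silent
      rw [roundProf_alive hj]
      apply silent_trunc_of
      rintro s ⟨h1, h2⟩ -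
      have := hts_le_psi (show t' s ≤ k' + 1 by omega)
      omega

end Decomp
/-! ### Part 6: deviation analysis and the main theorem -/

section Deviation

variable (E : Prio I S)

lemma tdaaux_silent {t : S → ℕ} {Q : I → Pref S} {i : I} (h : Silent (Q i)) :
    ∀ k, TDAaux E t Q k i = none := by
  intro k
  induction k with
  | zero => rfl
  | succ k ih =>
    rw [tdaaux_succ, glue_none ih]
    apply DA_silent
    rw [roundProf_alive ih]
    exact silent_trunc_of (fun s _ => h s)

lemma none_of_rank_le {p : Pref S} {x : Option S} (hok : okc p x)
    (h : p.rank none ≤ p.rank x) : x = none := by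
  cases x with
  | none => rfl
  | some s => exact absurd hok (by unfold okc acc; omega)

lemma stable_update_only {P : I → Pref S} {i : I} {π : Pref S} {ν : Matching I S}
    (hst : Stable E P ν) {s0 : S} (hν : ν i = some s0)
    (hIR : π.rank (some s0) ≤ π.rank none)
    (hbest : ∀ x : Option S, ¬ π.rank x < π.rank (some s0)) :
    Stable E (Function.update P i π) ν := by
  obtain ⟨hfeas, hIRν, hnb⟩ := hst
  refine ⟨hfeas, ?_, ?_⟩
  · intro j
    rcases eq_or_ne j i with rfl | hji
    · rw [Function.update_self, hν]; exact hIR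
    · rw [Function.update_of_ne hji]; exact hIRν j
  · rintro j s ⟨hpref, hcond⟩
    rcases eq_or_ne j i with rfl | hji
    · rw [Function.update_self, hν] at hpref
      exact hbest (some s) hpref
    · rw [Function.update_of_ne hji] at hpref
      exact hnb j s ⟨hpref, hcond⟩

/-- If a deviation gets `i` the school `s0` under TDA (with all other players aligned),
then the simple deviation reporting only `s0` also gets `i` the school `s0`. -/
theorem tda_deviation_only (t' : S → ℕ) (Pal : I → Pref S) (i : I)
    (hal : ∀ j, AlignedAcc t' (Pal j)) (Qi' : Pref S) {s0 : S} {K : ℕ}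
    (hK : TDAaux E t' (Function.update Pal i Qi') K i = some s0) :
    TDAaux E t' (Function.update Pal i (onlyPref s0)) K i = some s0 := by
  classical
  set P2 := Function.update Pal i Qi' with hP2
  set P1 := Function.update Pal i (onlyPref s0) with hP1
  have hP1j : ∀ j, j ≠ i → P1 j = Pal j := fun j hj => Function.update_of_ne hj _ _
  have hP2j : ∀ j, j ≠ i → P2 j = Pal j := fun j hj => Function.update_of_ne hj _ _
  have hP1i : P1 i = onlyPref s0 := Function.update_self _ _ _
  obtain ⟨hacc2, hkK, hR2k, hR2lt⟩ := tdaaux_val E hK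
  -- the tier of s0 is positive
  have hkpos : 1 ≤ t' s0 := by
    by_contra hz
    push_neg at hz
    have h0 : t' s0 = 0 := by omega
    rw [h0] at hR2k
    simp [TDAaux] at hR2k
  obtain ⟨K', hk'⟩ : ∃ K', t' s0 = K' + 1 := ⟨t' s0 - 1, by omega⟩
  rw [hk'] at hR2k hR2lt hkK
  -- acceptability of run values for non-deviators
  have hval1 : ∀ m j s, j ≠ i → TDAaux E t' P1 m j = some s →
      acc (Pal j) s ∧ t' s ≤ m := by
    intro m j s hj hjs
    have := tdaaux_val E hjs
    rw [hP1j j hj] at this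
    exact ⟨this.1, this.2.1⟩
  have hval2 : ∀ m j s, j ≠ i → TDAaux E t' P2 m j = some s →
      acc (Pal j) s ∧ t' s ≤ m := by
    intro m j s hj hjs
    have := tdaaux_val E hjs
    rw [hP2j j hj] at this
    exact ⟨this.1, this.2.1⟩
  -- invariant: under `only s0`, non-deviators are weakly better off, `i` unmatched
  have main : ∀ m, m ≤ K' →
      (∀ j, j ≠ i →
        (Pal j).rank (TDAaux E t' P1 m j) ≤ (Pal j).rank (TDAaux E t' P2 m j)) ∧
      TDAaux E t' P1 m i = none := by
    intro m
    induction m with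
    | zero => exact fun _ => ⟨fun j _ => le_rfl, rfl⟩
    | succ m ih =>
      intro hmk
      obtain ⟨ihj, ihi⟩ := ih (by omega)
      have hR2mi : TDAaux E t' P2 m i = none := hR2lt m (by omega)
      set M1 := TDAaux E t' P1 m with hM1
      set M2 := TDAaux E t' P2 m with hM2
      set prof1 := roundProf (fun s => t' s = m + 1) P1 M1 with hprof1
      set prof2 := roundProf (fun s => t' s = m + 1) P2 M2 with hprof2
      have hnone12 : ∀ l, l ≠ i → M1 l = none → M2 l = none := by
        intro l hl h1
        have := ihj l hl
        rw [h1] at this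
        refine none_of_rank_le ?_ this
        cases h2 : M2 l with
        | none => trivial
        | some b => exact (hval2 m l b hl h2).1
      have hprof1i_silent : Silent (prof1 i) := by
        rw [hprof1, roundProf_alive ihi, hP1i]
        apply silent_trunc_of
        intro s hs hacc
        rw [acc_onlyPref.1 hacc] at hs
        omega
      have hsil : ∀ l, prof1 l = prof2 l ∨ Silent (prof1 l) := by
        intro l
        rcases eq_or_ne l i with rfl | hli
        · exact Or.inr hprof1i_silent
        · by_cases h1 : M1 l = none
          · left
            rw [hprof1, hprof2, roundProf_alive h1, roundProf_alive (hnone12 l hli h1),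
              hP1j l hli, hP2j l hli]
          · right
            rw [hprof1]
            exact roundProf_silent_dead h1
      constructor
      · intro j hj
        rw [tdaaux_succ, tdaaux_succ, ← hM1, ← hM2, ← hprof1, ← hprof2]
        cases hm1 : M1 j with
        | some a =>
          obtain ⟨hacca, hta⟩ := hval1 m j a hj hm1
          rw [glue_some hm1]
          cases hm2 : M2 j with
          | some b =>
            rw [glue_some hm2]
            have := ihj j hj
            rw [hm1, hm2] at this
            exact this
          | none =>
            rw [glue_none hm2]
            cases hd2 : DA E prof2 j with
            | none => exact le_of_lt hacca
            | some b =>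
              have hv := DA_roundProf_val E (hd2 : DA E (roundProf _ P2 M2) j = some b)
              rw [hP2j j hj] at hv
              exact le_of_lt (alignedAcc_lt (hal j) hacca hv.2.2 (by omega))
        | none =>
          have hm2 : M2 j = none := hnone12 j hj hm1
          rw [glue_none hm1, glue_none hm2]
          have hpeq : prof1 j = prof2 j := by
            rw [hprof1, hprof2, roundProf_alive hm1, roundProf_alive hm2,
              hP1j j hj, hP2j j hj]
          have hmono := mono_silencing E hsil hpeq
          have hp1j : prof1 j = trunc (fun s => t' s = m + 1) (Pal j) := by
            rw [hprof1, roundProf_alive hm1, hP1j j hj]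
          have hok1 : okc (prof1 j) (DA E prof1 j) :=
            okc_of_IR (DA_stable E prof1).2.1 j
          have hok2 : okc (prof1 j) (DA E prof2 j) := by
            rw [hpeq]
            exact okc_of_IR (DA_stable E prof2).2.1 j
          rw [hp1j] at hok1 hok2 hmono
          rw [trunc_rank_good (Pal j) (okc_trunc_good hok1),
            trunc_rank_good (Pal j) (okc_trunc_good hok2)] at hmono
          exact hmono
      · rw [tdaaux_succ, ← hM1, ← hprof1, glue_none ihi]
        exact DA_silent E hprof1i_silent
  -- the final round K' + 1
  obtain ⟨invj, invi⟩ := main K' le_rfl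
  have hR2Ki : TDAaux E t' P2 K' i = none := hR2lt K' (by omega)
  set M1 := TDAaux E t' P1 K' with hM1
  set M2 := TDAaux E t' P2 K' with hM2
  set prof1 := roundProf (fun s => t' s = K' + 1) P1 M1 with hprof1
  set prof2 := roundProf (fun s => t' s = K' + 1) P2 M2 with hprof2
  have hDA2i : DA E prof2 i = some s0 := by
    rw [tdaaux_succ, ← hM2, ← hprof2, glue_none hR2Ki] at hR2k
    exact hR2k
  have hnone12 : ∀ l, l ≠ i → M1 l = none → M2 l = none := by
    intro l hl h1
    have := invj l hl
    rw [h1] at this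
    refine none_of_rank_le ?_ this
    cases h2 : M2 l with
    | none => trivial
    | some b => exact (hval2 K' l b hl h2).1
  -- the deviator's truncated `only s0` round preference
  set π : Pref S := trunc (fun s => t' s = K' + 1) (onlyPref s0) with hπ
  have hgood0 : goodB (fun s => t' s = K' + 1) (some s0) = true :=
    goodB_some_of hk'
  have hπ0 : π.rank (some s0) = 0 := by
    rw [hπ, trunc_rank_good _ hgood0, onlyPref_rank_self]
  set prof2' := Function.update prof2 i π with hprof2'
  have hstable' : Stable E prof2' (DA E prof2) := by
    apply stable_update_only E (DA_stable E prof2) hDA2i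
    · rw [hπ0]; exact Nat.zero_le _
    · intro x; rw [hπ0]; omega
  have h2' : DA E prof2' i = some s0 := by
    have hle := DA_opt E prof2' hstable' i
    rw [hDA2i] at hle
    have hup : prof2' i = π := Function.update_self _ _ _
    rw [hup] at hle
    have heq : π.rank (DA E prof2' i) = π.rank (some s0) := by
      rw [hπ0] at hle ⊢; omega
    exact π.inj heq
  have hp1i : prof1 i = π := by
    rw [hprof1, roundProf_alive invi, hP1i, hπ]
  have hsil' : ∀ l, prof1 l = prof2' l ∨ Silent (prof1 l) := by
    intro l
    rcases eq_or_ne l i with rfl | hli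
    · left
      rw [hp1i, hprof2', Function.update_self]
    · by_cases h1 : M1 l = none
      · left
        rw [hprof2', Function.update_of_ne hli, hprof1, hprof2,
          roundProf_alive h1, roundProf_alive (hnone12 l hli h1),
          hP1j l hli, hP2j l hli]
      · right
        rw [hprof1]
        exact roundProf_silent_dead h1
  have hpeq : prof1 i = prof2' i := by
    rw [hp1i, hprof2', Function.update_self]
  have hmono := mono_silencing E hsil' hpeq
  rw [h2', hp1i] at hmono
  have heq : π.rank (DA E prof1 i) = π.rank (some s0) := by
    rw [hπ0] at hmono ⊢; omega
  have hDA1i : DA E prof1 i = some s0 := π.inj heq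
  have hrun1 : TDAaux E t' P1 (K' + 1) i = some s0 := by
    rw [tdaaux_succ, ← hM1, ← hprof1, glue_none invi]
    exact hDA1i
  exact tdaaux_mono E hrun1 (by omega)

end Deviation
section MainGlue

lemma TDA_def (E : Prio I S) (t : S → ℕ) (Q : I → Pref S) :
    TDA E t Q = TDAaux E t Q (Finset.univ.sup t) := rfl

lemma psi_top (t t' : S → ℕ) :
    (Finset.univ.filter (fun s => t' s ≤ Finset.univ.sup t')).sup t
      = Finset.univ.sup t := by
  apply le_antisymm
  · exact Finset.sup_mono (Finset.filter_subset _ _)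
  · apply Finset.sup_le
    intro s _
    exact Finset.le_sup (by
      simp only [Finset.mem_filter, Finset.mem_univ, true_and]
      exact Finset.le_sup (Finset.mem_univ s))

end MainGlue
/-- If `t` refines `t'`, every Nash equilibrium outcome of TDA under `t`
is a Nash equilibrium outcome of TDA under `t'`. -/
theorem TDA_NashOutcomes_nested
    (E : Prio I S) (t t' : S → ℕ) (T T' : ℕ)
    (ht : IsTierStructure t T) (ht' : IsTierStructure t' T')
    (href : Refines t t')
    (R : I → Pref S) (μ : Matching I S)
    (h : NashOutcome R (TDA E t) μ) :
    NashOutcome R (TDA E t') μ := by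
  classical
  obtain ⟨Q0, hNE, hout⟩ := h
  have ht0 : ∀ s, 1 ≤ t s := fun s => (ht.1 s).1
  have ht1 : ∀ s, 1 ≤ t' s := fun s => (ht'.1 s).1
  set Pal : I → Pref S := fun j => reshuffle t (Q0 j) with hPal
  have hagree : ∀ j m, AgreeOn (fun s => t s = m) (Pal j) (Q0 j) :=
    fun j m => reshuffle_agree t (Q0 j) m
  have halt : ∀ j, AlignedAcc t (Pal j) := fun j => reshuffle_alignedAcc t (Q0 j)
  have halt' : ∀ p : Pref S, AlignedAcc t p → AlignedAcc t' p := by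
    intro p hp a b ha hb hr
    have h1 := hp a b ha hb hr
    by_contra hgt
    push_neg at hgt
    have := href a b hgt
    omega
  have hdecompPal := tda_decomp E t t' ht0 ht1 href Pal halt (Finset.univ.sup t')
  have hcongrPal := tdaaux_congr E (t := t) (P := Pal) (P' := Q0) hagree (Finset.univ.sup t)
  have houtcome : TDA E t' Pal = μ := by
    rw [TDA_def, hdecompPal, psi_top, hcongrPal, ← TDA_def E t Q0, hout]
  refine ⟨Pal, ?_, houtcome⟩
  intro i Qi'
  rw [show TDA E t' Pal i = μ i from congrFun houtcome i]
  cases hd : TDA E t' (Function.update Pal i Qi') i with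
  | none =>
    have hsilnone : Silent ((Function.update Q0 i (nonePref S)) i) := by
      rw [Function.update_self]
      exact silent_nonePref
    have h1 : TDA E t (Function.update Q0 i (nonePref S)) i = none :=
      tdaaux_silent E hsilnone _
    have h2 := hNE i (nonePref S)
    rw [hout, h1] at h2
    exact h2
  | some s0 =>
    have hK : TDAaux E t' (Function.update Pal i Qi') (Finset.univ.sup t') i = some s0 := hd
    have honly := tda_deviation_only E t' Pal i (fun j => halt' _ (halt j)) Qi' hK
    have hal1 : ∀ j, AlignedAcc t ((Function.update Pal i (onlyPref s0)) j) := by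
      intro j
      rcases eq_or_ne j i with rfl | hji
      · rw [Function.update_self]; exact onlyPref_alignedAcc t s0
      · rw [Function.update_of_ne hji]; exact halt j
    have hdec1 := tda_decomp E t t' ht0 ht1 href _ hal1 (Finset.univ.sup t')
    have hagree1 : ∀ j m, AgreeOn (fun s => t s = m)
        ((Function.update Pal i (onlyPref s0)) j)
        ((Function.update Q0 i (onlyPref s0)) j) := by
      intro j m
      rcases eq_or_ne j i with rfl | hji
      · rw [Function.update_self, Function.update_self]
        exact AgreeOn.refl _
      · rw [Function.update_of_ne hji, Function.update_of_ne hji]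
        exact hagree j m
    have hcongr1 := tdaaux_congr E hagree1 (Finset.univ.sup t)
    have hfin : TDA E t (Function.update Q0 i (onlyPref s0)) i = some s0 := by
      rw [TDA_def, ← hcongr1, ← psi_top t t', ← hdec1]
      exact honly
    have h2 := hNE i (onlyPref s0)
    rw [hout, hfin] at h2
    exact h2

end SchoolChoice
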